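/- arXiv:1109.4501 — 5 statements merged into one kernel-verified Lean document; each statement's English description precedes it below -/
import Mathlib

section
/- There exist at most ⌊N²/4⌋ + 1 linearly independent pairwise commuting N×N matrices over a field; i.e., any commutative Lie subalgebra of gl(N) has dimension at most ⌊N²/4⌋ + 1. -/
open Module Submodule Matrix

theorem exists_dual_family {K V : Type*} [Field K] [AddCommGroup V] [Module K V]
    {d : ℕ} {w : Fin d → V} (li : LinearIndependent K w) :
    ∃ f : Fin d → (V →ₗ[K] K), ∀ i j, f i (w j) = if i = j then 1 else 0 := by
  set S := Submodule.span K (Set.range w) with hS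
  obtain ⟨q, hq⟩ := S.exists_isCompl
  let bs : Basis (Fin d) K S := Basis.span li
  refine ⟨fun i => (bs.coord i).comp (S.projectionOnto q hq), fun i j => ?_⟩
  have hw : (w j) ∈ S := Submodule.subset_span ⟨j, rfl⟩
  have h1 : S.projectionOnto q hq (w j) = ⟨w j, hw⟩ := by
    have := Submodule.linearProjOfIsCompl_apply_left hq ⟨w j, hw⟩
    simpa using this
  have h2 : (⟨w j, hw⟩ : S) = bs j := by
    exact (Basis.span_apply li j).symm
  simp [LinearMap.comp_apply, h1, h2, Basis.coord_apply, Basis.repr_self,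
    Finsupp.single_apply, eq_comm]

theorem exists_param_linearIndependent {K V : Type*} [Field K] [Infinite K]
    [AddCommGroup V] [Module K V]
    {d : ℕ} (a b : Fin d → V) (li : LinearIndependent K a) :
    ∃ t : K, t ≠ 0 ∧ LinearIndependent K (fun i => a i + t • b i) := by
  obtain ⟨f, hf⟩ := exists_dual_family li
  let Mp : Matrix (Fin d) (Fin d) (Polynomial K) :=
    Matrix.of fun i j => Polynomial.C (f i (a j)) + Polynomial.X * Polynomial.C (f i (b j))
  have hmap : ∀ t : K, Mp.map (Polynomial.evalRingHom t) =
      Matrix.of fun i j => f i (a j + t • b j) := by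
    intro t; ext i j
    simp only [Mp, Matrix.map_apply, Matrix.of_apply, _root_.map_add, _root_.map_mul,
      Polynomial.coe_evalRingHom, Polynomial.eval_C, Polynomial.eval_X,
      Polynomial.eval_mul, Polynomial.eval_add, _root_.map_smul, smul_eq_mul]
  have heval : ∀ t : K, (Mp.det).eval t =
      (Matrix.of fun i j => f i (a j + t • b j)).det := by
    intro t
    have h := RingHom.map_det (Polynomial.evalRingHom t) Mp
    simp only [RingHom.mapMatrix_apply] at h
    rw [hmap t] at h
    simpa using h
  have hP0 : (Mp.det).eval 0 = 1 := by
    rw [heval 0]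
    have : (Matrix.of fun i j => f i (a j + (0:K) • b j)) = 1 := by
      ext i j; simp [Matrix.one_apply, hf]
    rw [this, Matrix.det_one]
  have hPne : Mp.det ≠ 0 := fun h => by simp [h] at hP0
  have hfin : ({x | (Mp.det).IsRoot x} ∪ {0}).Finite :=
    (Polynomial.finite_setOf_isRoot hPne).union (Set.finite_singleton 0)
  obtain ⟨t, ht⟩ := ((Set.infinite_univ (α := K)).diff hfin).nonempty
  simp only [Set.mem_diff, Set.mem_univ, Set.mem_union, Set.mem_setOf_eq,
    Set.mem_singleton_iff, true_and, not_or] at ht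
  refine ⟨t, ht.2, ?_⟩
  set G : Matrix (Fin d) (Fin d) K := Matrix.of fun i j => f i (a j + t • b j) with hG
  have hdet : IsUnit G.det := by
    rw [← heval t] at *
    exact isUnit_iff_ne_zero.mpr ht.1
  rw [Fintype.linearIndependent_iff]
  intro c hc i
  have hGc : G.mulVec c = 0 := by
    funext i
    have := congrArg (f i) hc
    simpa [_root_.map_sum, _root_.map_smul, Matrix.mulVec, dotProduct, G, smul_eq_mul,
      mul_add, mul_comm, mul_left_comm] using this
  have : c = 0 := by
    have h1 : (G⁻¹ * G).mulVec c = 0 := by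
      rw [← Matrix.mulVec_mulVec, hGc, Matrix.mulVec_zero]
    rwa [Matrix.nonsing_inv_mul G hdet, Matrix.one_mulVec] at h1
  simp [this]

theorem matrix_eq_zero_of_forall_mulVec {K : Type*} [Field K] {N : ℕ}
    {M : Matrix (Fin N) (Fin N) K} (h : ∀ u, M *ᵥ u = 0) : M = 0 := by
  ext i j
  have := congrFun (h (Pi.single j 1)) i
  simpa [Matrix.mulVec_single] using this

theorem schur_arith {N k : ℕ} (h2 : 2 ≤ k) (hN : k ≤ N) :
    k + (N - k) * (k - 1) ≤ N ^ 2 / 4 + 1 := by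
  obtain ⟨m, rfl⟩ : ∃ m, N = k + m := ⟨N - k, by omega⟩
  obtain ⟨j, rfl⟩ : ∃ j, k = j + 2 := ⟨k - 2, by omega⟩
  have e1 : (j + 2 + m) - (j + 2) = m := by omega
  have e2 : (j + 2) - 1 = j + 1 := by omega
  rw [e1, e2]
  have h4 : 4 * ((j + 2) + m * (j + 1)) ≤ (j + 2 + m) ^ 2 + 4 := by
    zify
    nlinarith [sq_nonneg ((j : ℤ) - m)]
  generalize hX : (j + 2) + m * (j + 1) = X at h4 ⊢
  generalize hY : (j + 2 + m) ^ 2 = Y at h4 ⊢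
  omega

set_option maxHeartbeats 2000000 in
set_option synthInstance.maxHeartbeats 200000 in
theorem schur_subalgebra_bound_infinite {N : ℕ} {K : Type*} [Field K] [Infinite K]
    (S : Subalgebra K (Matrix (Fin N) (Fin N) K))
    (hcomm : ∀ A ∈ S, ∀ B ∈ S, A * B = B * A) :
    Module.finrank K (Subalgebra.toSubmodule S) ≤ N ^ 2 / 4 + 1 := by
  classical
  by_cases hN : N = 0
  · subst hN
    have h1 : Module.finrank K (Subalgebra.toSubmodule S)
        ≤ Module.finrank K (Matrix (Fin 0) (Fin 0) K) := Submodule.finrank_le _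
    have h2 : Module.finrank K (Matrix (Fin 0) (Fin 0) K) = 0 := by
      rw [Module.finrank_matrix]; simp
    omega
  set T := Subalgebra.toSubmodule S with hT
  have hmemT : ∀ A : T, (A : Matrix (Fin N) (Fin N) K) ∈ S := fun A => A.2
  let φ : (Fin N → K) → (T →ₗ[K] (Fin N → K)) := fun v =>
    { toFun := fun A => (A : Matrix (Fin N) (Fin N) K) *ᵥ v
      map_add' := fun A B => by simp [Matrix.add_mulVec]
      map_smul' := fun c A => by simp [Matrix.smul_mulVec] }
  let kf : (Fin N → K) → ℕ := fun v => Module.finrank K (LinearMap.range (φ v))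
  have hbdd : ∀ u, kf u ≤ N := fun u => by
    have := Submodule.finrank_le (LinearMap.range (φ u))
    rwa [Module.finrank_fintype_fun_eq_card, Fintype.card_fin] at this
  have hne : (Set.range kf).Nonempty := ⟨kf 0, ⟨0, rfl⟩⟩
  have hbd : BddAbove (Set.range kf) := ⟨N, by rintro x ⟨u, rfl⟩; exact hbdd u⟩
  obtain ⟨v, hv⟩ := Nat.sSup_mem hne hbd
  have hmax : ∀ u, kf u ≤ kf v := fun u => by
    rw [hv]; exact le_csSup hbd ⟨u, rfl⟩
  set W := LinearMap.range (φ v) with hW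
  set k := kf v with hk
  have hone : (1 : Matrix (Fin N) (Fin N) K) ∈ T := S.one_mem
  have hvW : v ∈ W := ⟨⟨1, hone⟩, by simp [φ, Matrix.one_mulVec]⟩
  by_cases hk1 : k ≤ 1
  · -- small case: every matrix in S is "locally scalar"
    have hspan : ∀ (A : T) (u : Fin N → K),
        (A : Matrix (Fin N) (Fin N) K) *ᵥ u ∈ Submodule.span K {u} := by
      intro A u
      rcases eq_or_ne u 0 with rfl | hu
      · simp [Matrix.mulVec_zero]
      · have huW : u ∈ LinearMap.range (φ u) := ⟨⟨1, hone⟩, by simp [φ, Matrix.one_mulVec]⟩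
        have hle : Submodule.span K {u} ≤ LinearMap.range (φ u) := by
          rwa [Submodule.span_singleton_le_iff_mem]
        have heq : Submodule.span K {u} = LinearMap.range (φ u) := by
          apply Submodule.eq_of_le_of_finrank_le hle
          rw [finrank_span_singleton hu]
          exact le_trans (hmax u) hk1
        rw [heq]; exact ⟨A, rfl⟩
    -- the "evaluation at e0" map is injective, so finrank T ≤ 1
    set i0 : Fin N := ⟨0, Nat.pos_of_ne_zero hN⟩
    set e0 : Fin N → K := Pi.single i0 1 with he0
    have he0ne : e0 ≠ 0 := by
      intro h
      have := congrFun h i0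
      simp [e0, Pi.single_eq_same] at this
    have hker : LinearMap.ker (φ e0) = ⊥ := by
      rw [LinearMap.ker_eq_bot']
      intro A h0
      have h0' : (A : Matrix (Fin N) (Fin N) K) *ᵥ e0 = 0 := h0
      have hall : ∀ u, (A : Matrix (Fin N) (Fin N) K) *ᵥ u = 0 := by
        intro u
        by_cases hu : u ∈ Submodule.span K {e0}
        · obtain ⟨c, rfl⟩ := Submodule.mem_span_singleton.mp hu
          rw [Matrix.mulVec_smul, h0', smul_zero]
        · have hu0 : u ≠ 0 := fun h => hu (h ▸ Submodule.zero_mem _)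
          obtain ⟨c', hc'⟩ := Submodule.mem_span_singleton.mp (hspan A u)
          obtain ⟨c, hc⟩ := Submodule.mem_span_singleton.mp (hspan A (e0 + u))
          rw [Matrix.mulVec_add, h0', zero_add, ← hc'] at hc
          -- hc : c • (e0 + u) = c' • u
          have hc0 : c = 0 := by
            by_contra hcne
            have he0span : e0 = (c⁻¹ * (c' - c)) • u := by
              rw [smul_add] at hc
              have : c • e0 = (c' - c) • u := by
                rw [sub_smul]; rw [← hc]; abel
              rw [mul_smul, ← this, ← mul_smul, inv_mul_cancel₀ hcne, one_smul]
            by_cases hd : c⁻¹ * (c' - c) = 0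
            · rw [hd, zero_smul] at he0span; exact he0ne he0span
            · apply hu
              rw [Submodule.mem_span_singleton]
              refine ⟨(c⁻¹ * (c' - c))⁻¹, ?_⟩
              rw [he0span, ← mul_smul, inv_mul_cancel₀ hd, one_smul]
          rw [hc0, zero_smul] at hc
          have : c' = 0 := by
            rcases smul_eq_zero.mp hc.symm with h | h
            · exact h
            · exact absurd h hu0
          rw [← hc', this, zero_smul]
      exact Subtype.ext (matrix_eq_zero_of_forall_mulVec hall)
    have hrn := LinearMap.finrank_range_add_finrank_ker (φ e0)
    rw [hker, finrank_bot] at hrn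
    have : Module.finrank K T ≤ 1 := by
      have h1 : Module.finrank K (LinearMap.range (φ e0)) ≤ 1 := le_trans (hmax e0) hk1
      omega
    omega
  -- main case : 2 ≤ k
  push_neg at hk1
  have hk2 : 2 ≤ k := hk1
  have hvne : v ≠ 0 := by
    intro h
    have hzero : φ v = 0 := by
      apply LinearMap.ext; intro A
      simp [φ, h, Matrix.mulVec_zero]
    have : k = 0 := by
      rw [hk]; show Module.finrank K (LinearMap.range (φ v)) = 0
      rw [hzero, LinearMap.range_zero, finrank_bot]
    omega
  have hKW : ∀ A : T, A ∈ LinearMap.ker (φ v) → ∀ w ∈ W,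
      (A : Matrix (Fin N) (Fin N) K) *ᵥ w = 0 := by
    intro A hA w hw
    obtain ⟨B, rfl⟩ := hw
    have hA0 : (A : Matrix (Fin N) (Fin N) K) *ᵥ v = 0 := hA
    show (A : Matrix (Fin N) (Fin N) K) *ᵥ ((B : Matrix (Fin N) (Fin N) K) *ᵥ v) = 0
    rw [Matrix.mulVec_mulVec, hcomm _ (hmemT A) _ (hmemT B), ← Matrix.mulVec_mulVec, hA0,
      Matrix.mulVec_zero]
  -- step (a) : images of kernel elements lie in W
  have hIm : ∀ A : T, A ∈ LinearMap.ker (φ v) → ∀ u,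
      (A : Matrix (Fin N) (Fin N) K) *ᵥ u ∈ W := by
    intro A hA u
    by_contra hu
    have hA0 : (A : Matrix (Fin N) (Fin N) K) *ᵥ v = 0 := hA
    have hfr : Module.finrank K W = k := rfl
    obtain ⟨bW⟩ : Nonempty (Basis (Fin k) K W) := ⟨Module.finBasisOfFinrankEq K W hfr⟩
    have hpre : ∀ i : Fin k, ∃ B : T, φ v B = (bW i : Fin N → K) := fun i => (bW i).2
    choose Bm hBm using hpre
    have licoe : LinearIndependent K (fun i => ((bW i : W) : Fin N → K)) :=
      bW.linearIndependent.map' W.subtype (Submodule.ker_subtype W)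
    have hsp : Submodule.span K (Set.range (fun i => ((bW i : W) : Fin N → K))) = W := by
      have h1 : (Set.range fun i => ((bW i : W) : Fin N → K))
          = W.subtype '' (Set.range bW) := by
        rw [← Set.range_comp]; rfl
      rw [h1, Submodule.span_image, Basis.span_eq, Submodule.map_top, Submodule.range_subtype]
    set a : Fin (k + 1) → (Fin N → K) :=
      Fin.snoc (fun i => ((bW i : W) : Fin N → K)) ((A : Matrix (Fin N) (Fin N) K) *ᵥ u) with ha
    set b : Fin (k + 1) → (Fin N → K) :=
      Fin.snoc (fun i => ((Bm i : Matrix (Fin N) (Fin N) K)) *ᵥ u) 0 with hb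
    have lia : LinearIndependent K a := by
      rw [ha]
      apply linearIndependent_fin_snoc.mpr
      exact ⟨licoe, by rw [hsp]; exact hu⟩
    obtain ⟨t, ht0, hli⟩ := exists_param_linearIndependent a b lia
    set x := v + t • u with hx
    have hmem : ∀ i, a i + t • b i ∈ LinearMap.range (φ x) := by
      intro i
      induction i using Fin.lastCases with
      | last =>
        have ha' : a (Fin.last k) = (A : Matrix (Fin N) (Fin N) K) *ᵥ u := by
          rw [ha]; simp
        have hb' : b (Fin.last k) = 0 := by rw [hb]; simp
        rw [ha', hb', smul_zero, add_zero]
        refine ⟨t⁻¹ • A, ?_⟩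
        show ((t⁻¹ • A : T) : Matrix (Fin N) (Fin N) K) *ᵥ x = _
        rw [Submodule.coe_smul, Matrix.smul_mulVec, hx, Matrix.mulVec_add, hA0, zero_add,
          Matrix.mulVec_smul, smul_smul, inv_mul_cancel₀ ht0, one_smul]
      | cast i =>
        have ha' : a (Fin.castSucc i) = ((bW i : W) : Fin N → K) := by rw [ha]; simp
        have hb' : b (Fin.castSucc i) = ((Bm i : Matrix (Fin N) (Fin N) K)) *ᵥ u := by
          rw [hb]; simp
        rw [ha', hb']
        refine ⟨Bm i, ?_⟩
        show ((Bm i : T) : Matrix (Fin N) (Fin N) K) *ᵥ x = _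
        rw [hx, Matrix.mulVec_add, Matrix.mulVec_smul]
        congr 1
        exact hBm i
    let cfam : Fin (k + 1) → (LinearMap.range (φ x)) := fun i => ⟨a i + t • b i, hmem i⟩
    have lic : LinearIndependent K cfam := by
      apply LinearIndependent.of_comp (LinearMap.range (φ x)).subtype
      exact hli
    have hcard := lic.fintype_card_le_finrank
    rw [Fintype.card_fin] at hcard
    have hle := hmax x
    have : kf x = Module.finrank K (LinearMap.range (φ x)) := rfl
    omega
  -- step (c) : build the injection from ker (φ v) into Hom((K^N)/W, W/Kv)
  set K0 := LinearMap.ker (φ v) with hK0def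
  set vW : W := ⟨v, hvW⟩ with hvWdef
  have hvWne : vW ≠ 0 := fun h => hvne (congrArg Subtype.val h)
  set Z : Submodule K W := Submodule.span K {vW} with hZ
  have hImK0 : ∀ A : K0, ∀ u, ((A : T) : Matrix (Fin N) (Fin N) K) *ᵥ u ∈ W :=
    fun A u => hIm A.1 A.2 u
  let ψ : K0 → ((Fin N → K) →ₗ[K] W) := fun A =>
    LinearMap.codRestrict W (Matrix.mulVecLin ((A : T) : Matrix (Fin N) (Fin N) K))
      (fun u => by rw [Matrix.mulVecLin_apply]; exact hImK0 A u)
  have hψ : ∀ (A : K0) (u : Fin N → K),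
      ((ψ A u : W) : Fin N → K) = ((A : T) : Matrix (Fin N) (Fin N) K) *ᵥ u := by
    intro A u
    simp [ψ, LinearMap.codRestrict_apply, Matrix.mulVecLin_apply]
  let χ : K0 → ((Fin N → K) →ₗ[K] (W ⧸ Z)) := fun A => Z.mkQ.comp (ψ A)
  have hχW : ∀ A : K0, W ≤ LinearMap.ker (χ A) := by
    intro A w hw
    have h0 : ((A : T) : Matrix (Fin N) (Fin N) K) *ᵥ w = 0 := hKW A.1 A.2 w hw
    have hψ0 : ψ A w = 0 := Subtype.ext (by rw [hψ A w, h0]; rfl)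
    show Z.mkQ (ψ A w) = 0
    rw [hψ0, map_zero]
  let Φf : K0 → (((Fin N → K) ⧸ W) →ₗ[K] (W ⧸ Z)) := fun A => W.liftQ (χ A) (hχW A)
  have hΦf : ∀ (A : K0) (u : Fin N → K),
      Φf A (Submodule.Quotient.mk u) = Z.mkQ (ψ A u) := by
    intro A u
    exact Submodule.liftQ_apply W (χ A) u
  have hΦadd : ∀ A B : K0, Φf (A + B) = Φf A + Φf B := by
    intro A B
    apply LinearMap.ext; intro q
    obtain ⟨u, rfl⟩ := Submodule.Quotient.mk_surjective W q
    rw [LinearMap.add_apply, hΦf, hΦf, hΦf, ← map_add]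
    congr 1
    apply Subtype.ext
    push_cast [hψ]
    rw [Matrix.add_mulVec]
  have hΦsmul : ∀ (c : K) (A : K0), Φf (c • A) = c • Φf A := by
    intro c A
    apply LinearMap.ext; intro q
    obtain ⟨u, rfl⟩ := Submodule.Quotient.mk_surjective W q
    rw [LinearMap.smul_apply, hΦf, hΦf, ← _root_.map_smul]
    congr 1
    apply Subtype.ext
    push_cast [hψ]
    rw [Matrix.smul_mulVec]
  let Φ : K0 →ₗ[K] (((Fin N → K) ⧸ W) →ₗ[K] (W ⧸ Z)) :=
    { toFun := Φf
      map_add' := hΦadd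
      map_smul' := hΦsmul }
  have hinj : Function.Injective Φ := by
    rw [injective_iff_map_eq_zero]
    intro A h0
    have hsp : ∀ u, ((A : T) : Matrix (Fin N) (Fin N) K) *ᵥ u
        ∈ Submodule.span K ({v} : Set (Fin N → K)) := by
      intro u
      have h1 : Φf A (Submodule.Quotient.mk u) = 0 := by
        show Φ A (Submodule.Quotient.mk u) = 0
        rw [h0]; rfl
      rw [hΦf] at h1
      have h2 : ψ A u ∈ Z := by
        rwa [← Submodule.Quotient.mk_eq_zero, ← Submodule.mkQ_apply]
      obtain ⟨c, hc⟩ := Submodule.mem_span_singleton.mp h2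
      refine Submodule.mem_span_singleton.mpr ⟨c, ?_⟩
      have := congrArg (Subtype.val) hc
      rw [← hψ A u]
      simpa [hvWdef] using this
    by_contra hAne
    have hA0' : ((A : T) : Matrix (Fin N) (Fin N) K) ≠ 0 := by
      intro h
      apply hAne
      apply Subtype.ext; apply Subtype.ext; exact h
    have : ∃ u0, ((A : T) : Matrix (Fin N) (Fin N) K) *ᵥ u0 ≠ 0 := by
      by_contra hall
      push_neg at hall
      exact hA0' (matrix_eq_zero_of_forall_mulVec hall)
    obtain ⟨u0, hu0⟩ := this
    obtain ⟨c0, hc0⟩ := Submodule.mem_span_singleton.mp (hsp u0)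
    have hc0ne : c0 ≠ 0 := by
      intro h; rw [h, zero_smul] at hc0; exact hu0 hc0.symm
    have hWle : W ≤ Submodule.span K ({v} : Set (Fin N → K)) := by
      rintro w ⟨B, rfl⟩
      have h1 := hsp ((B : Matrix (Fin N) (Fin N) K) *ᵥ u0)
      have h2 : ((A : T) : Matrix (Fin N) (Fin N) K) *ᵥ
          ((B : Matrix (Fin N) (Fin N) K) *ᵥ u0)
          = c0 • ((B : Matrix (Fin N) (Fin N) K) *ᵥ v) := by
        rw [Matrix.mulVec_mulVec, hcomm _ (hmemT A.1) _ (hmemT B), ← Matrix.mulVec_mulVec,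
          ← hc0, Matrix.mulVec_smul]
      rw [h2] at h1
      exact (Submodule.smul_mem_iff _ hc0ne).mp h1
    have hle1 : k ≤ 1 := by
      have h3 := Submodule.finrank_mono hWle
      rw [finrank_span_singleton hvne] at h3
      exact h3
    omega
  -- dimension count
  have hQ1 : Module.finrank K ((Fin N → K) ⧸ W) = N - k := by
    have h1 := Submodule.finrank_quotient_add_finrank W
    rw [Module.finrank_fintype_fun_eq_card, Fintype.card_fin] at h1
    have h2 : Module.finrank K W = k := rfl
    omega
  have hQ2 : Module.finrank K (W ⧸ Z) = k - 1 := by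
    have h1 := Submodule.finrank_quotient_add_finrank Z
    rw [finrank_span_singleton hvWne] at h1
    have h2 : Module.finrank K W = k := rfl
    omega
  have hK0le : Module.finrank K K0 ≤ (N - k) * (k - 1) := by
    have h1 := LinearMap.finrank_le_finrank_of_injective hinj
    rwa [Module.finrank_linearMap, hQ1, hQ2] at h1
  have hrn : k + Module.finrank K K0 = Module.finrank K T :=
    LinearMap.finrank_range_add_finrank_ker (φ v)
  have hkN : k ≤ N := hbdd v
  have harith := schur_arith hk2 hkN
  generalize hP : (N - k) * (k - 1) = P at hK0le harith
  generalize hB : N ^ 2 / 4 + 1 = Bd at harith ⊢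
  omega

/-- Schur's theorem: any commutative Lie subalgebra of `gl(N)`
(i.e. any linear subspace of `N × N` matrices on which all commutators vanish)
has dimension at most `⌊N²/4⌋ + 1`; equivalently, there exist at most
`⌊N²/4⌋ + 1` linearly independent pairwise commuting `N × N` matrices. -/
theorem schur_commuting_matrices_bound (N : ℕ) (K : Type*) [Field K]
    (L : Submodule K (Matrix (Fin N) (Fin N) K))
    (hcomm : ∀ A ∈ L, ∀ B ∈ L, A * B - B * A = 0) :
    Module.finrank K L ≤ N ^ 2 / 4 + 1 := by
  classical
  set d := Module.finrank K L with hd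
  let bL : Basis (Fin d) K L := Module.finBasisOfFinrankEq K L rfl
  set w : Fin d → Matrix (Fin N) (Fin N) K := fun i => (bL i : Matrix (Fin N) (Fin N) K) with hw
  have hwmem : ∀ i, w i ∈ L := fun i => (bL i).2
  have hwcomm : ∀ i j, w i * w j = w j * w i := fun i j =>
    sub_eq_zero.mp (hcomm _ (hwmem i) _ (hwmem j))
  have liw : LinearIndependent K w :=
    bL.linearIndependent.map' L.subtype (Submodule.ker_subtype L)
  obtain ⟨f, hf⟩ := exists_dual_family liw
  let F := AlgebraicClosure K
  let σ : Matrix (Fin N) (Fin N) K →+* Matrix (Fin N) (Fin N) F :=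
    (algebraMap K F).mapMatrix
  set m : Fin d → Matrix (Fin N) (Fin N) F := fun i => σ (w i) with hm
  have hmcomm : ∀ i j, m i * m j = m j * m i := fun i j => by
    rw [hm]
    show σ (w i) * σ (w j) = σ (w j) * σ (w i)
    rw [← _root_.map_mul, ← _root_.map_mul, hwcomm]
  have hmentry : ∀ (j : Fin d) p q, (m j) p q = algebraMap K F ((w j) p q) := by
    intro j p q; rfl
  let g : Fin d → (Matrix (Fin N) (Fin N) F →ₗ[F] F) := fun i =>
    { toFun := fun M => ∑ p : Fin N, ∑ q : Fin N,
        algebraMap K F (f i (Matrix.single p q 1)) * M p q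
      map_add' := by
        intro M1 M2
        simp [Matrix.add_apply, mul_add, Finset.sum_add_distrib]
      map_smul' := by
        intro c M
        simp [Matrix.smul_apply, smul_eq_mul, Finset.mul_sum, mul_left_comm]
        rw [Finset.mul_sum]
        exact Finset.sum_congr rfl fun p _ => by rw [Finset.mul_sum] }
  have hexp : ∀ i j, f i (w j)
      = ∑ p : Fin N, ∑ q : Fin N, (w j) p q * f i (Matrix.single p q 1) := by
    intro i j
    conv_lhs => rw [Matrix.matrix_eq_sum_single (w j)]
    rw [map_sum]
    apply Finset.sum_congr rfl
    intro p _
    rw [map_sum]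
    apply Finset.sum_congr rfl
    intro q _
    have h1 : Matrix.single p q ((w j) p q)
        = (w j) p q • Matrix.single p q (1 : K) := by
      rw [Matrix.smul_single, smul_eq_mul, mul_one]
    rw [h1, _root_.map_smul, smul_eq_mul]
  have hgm : ∀ i j, g i (m j) = if i = j then 1 else 0 := by
    intro i j
    show (∑ p : Fin N, ∑ q : Fin N,
        algebraMap K F (f i (Matrix.single p q 1)) * (m j) p q) = _
    have h2 : ∀ p q : Fin N,
        algebraMap K F (f i (Matrix.single p q 1)) * (m j) p q
        = algebraMap K F ((w j) p q * f i (Matrix.single p q 1)) := by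
      intro p q
      rw [hmentry, ← _root_.map_mul, mul_comm]
    simp only [h2, ← map_sum]
    rw [← hexp, hf]
    split <;> simp
  have lim : LinearIndependent F m := by
    rw [Fintype.linearIndependent_iff]
    intro cc hcc i
    have h3 := congrArg (g i) hcc
    rw [_root_.map_sum, _root_.map_zero] at h3
    have h4 : ∀ j, g i (cc j • m j) = cc j * (if i = j then 1 else 0) := by
      intro j; rw [_root_.map_smul, hgm, smul_eq_mul]
    rw [Finset.sum_congr rfl (fun j _ => h4 j)] at h3
    simpa [Finset.sum_ite_eq', mul_ite] using h3
  set L' : Submodule F (Matrix (Fin N) (Fin N) F) := Submodule.span F (Set.range m) with hL'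
  have hfr' : Module.finrank F L' = d := by
    rw [hL']
    have := finrank_span_eq_card lim
    rwa [Fintype.card_fin] at this
  have hmain : ∀ y ∈ L', ∀ x ∈ Set.range m, x * y = y * x := by
    intro y hy
    induction hy using Submodule.span_induction with
    | mem z hz =>
      intro x hx
      obtain ⟨i, rfl⟩ := hx
      obtain ⟨j, rfl⟩ := hz
      exact hmcomm i j
    | zero => intro x _; simp
    | add a b ha hb hia hib =>
      intro x hx
      rw [mul_add, add_mul, hia x hx, hib x hx]
    | smul c a ha hia =>
      intro x hx
      rw [Matrix.mul_smul, Matrix.smul_mul, hia x hx]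
  have hcomm' : ∀ x ∈ L', ∀ y ∈ L', x * y = y * x := by
    intro x hx y hy
    induction hx using Submodule.span_induction with
    | mem z hz => exact hmain y hy z hz
    | zero => simp
    | add a b ha hb hia hib => rw [add_mul, mul_add, hia, hib]
    | smul c a ha hia => rw [Matrix.smul_mul, Matrix.mul_smul, hia]
  set A := Algebra.adjoin F ((L' : Set (Matrix (Fin N) (Fin N) F))) with hA
  have hcommA : ∀ X ∈ A, ∀ Y ∈ A, X * Y = Y * X := by
    intro X hX Y hY
    refine Algebra.adjoin_induction₂ (s := (L' : Set (Matrix (Fin N) (Fin N) F)))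
      (p := fun x y _ _ => x * y = y * x)
      ?_ ?_ ?_ ?_ ?_ ?_ ?_ ?_ hX hY
    · intro x y hx hy; exact hcomm' x hx y hy
    · intro r1 r2; exact Algebra.commutes r1 _
    · intro r x _; exact Algebra.commutes r x
    · intro r x _; exact (Algebra.commutes r x).symm
    · intro x y z _ _ _ h1 h2; rw [add_mul, mul_add, h1, h2]
    · intro x y z _ _ _ h1 h2; rw [mul_add, add_mul, h1, h2]
    · intro x y z _ _ _ h1 h2; rw [mul_assoc, h2, ← mul_assoc, h1, mul_assoc]
    · intro x y z _ _ _ h1 h2; rw [← mul_assoc, h1, mul_assoc, h2, ← mul_assoc]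
  have hbound := schur_subalgebra_bound_infinite A hcommA
  have hle : L' ≤ Subalgebra.toSubmodule A := by
    intro x hx
    exact Algebra.subset_adjoin hx
  have hmono := Submodule.finrank_mono hle
  rw [hfr'] at hmono
  exact le_trans hmono hbound
end

section
/- For w₁, w₂ in a Coxeter group, w₁ ≤ w₂ in the weak left Bruhat order if and only if N(w₁) ⊆ N(w₂). -/
open scoped RealInnerProductSpace

/-- Geometric data of a (finite or affine) root system with a choice of
positive and simple roots, inside a real inner product space. -/
structure RootSystemData (V : Type*) [NormedAddCommGroup V] [InnerProductSpace ℝ V] where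
  roots : Set V
  pos : Set V
  simples : Set V
  simples_sub : simples ⊆ pos
  pos_sub : pos ⊆ roots
  ne_zero : ∀ α ∈ roots, α ≠ (0 : V)
  eq_union : roots = pos ∪ (Neg.neg '' pos)
  not_both : ∀ α ∈ pos, -α ∉ pos

namespace RootSystemData

variable {V : Type*} [NormedAddCommGroup V] [InnerProductSpace ℝ V]
  [FiniteDimensional ℝ V]

/-- The orthogonal reflection in the hyperplane orthogonal to `α`. -/
noncomputable def srefl (α : V) : V ≃ₗᵢ[ℝ] V := Submodule.reflection (ℝ ∙ α)ᗮ

variable (R : RootSystemData V)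

/-- The root system data is geometric: simple reflections permute the
positive roots other than the corresponding simple root, and the set of
roots is stable under all reflections in roots. -/
structure IsGeometric : Prop where
  simple_perm : ∀ α ∈ R.simples, ∀ β ∈ R.pos, β ≠ α → srefl α β ∈ R.pos
  refl_stable : ∀ α ∈ R.roots, ∀ β ∈ R.roots, srefl α β ∈ R.roots
  pos_comb : ∀ α ∈ R.pos, α ∈ AddSubmonoid.closure R.simples

/-- The Weyl group: the group generated by the simple reflections. -/
noncomputable def W : Subgroup (V ≃ₗᵢ[ℝ] V) :=
  Subgroup.closure {g | ∃ α ∈ R.simples, g = srefl α}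

/-- The inversion set `N(w) = {α ∈ Δ⁺ ∣ w⁻¹ α ∈ -Δ⁺}`. -/
def N (w : V ≃ₗᵢ[ℝ] V) : Set V := {α | α ∈ R.pos ∧ w⁻¹ α ∈ Neg.neg '' R.pos}

/-- `l` is a word in the simple reflections representing `w`. -/
noncomputable def IsWord (l : List V) (w : V ≃ₗᵢ[ℝ] V) : Prop :=
  (∀ α ∈ l, α ∈ R.simples) ∧ w = (l.map srefl).prod

/-- The length of `w` : the least length of a word in the simple reflections
representing `w`. -/
noncomputable def length (w : V ≃ₗᵢ[ℝ] V) : ℕ :=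
  sInf {n | ∃ l : List V, R.IsWord l w ∧ l.length = n}

/-- A reduced expression. -/
noncomputable def IsReduced (l : List V) (w : V ≃ₗᵢ[ℝ] V) : Prop :=
  R.IsWord l w ∧ l.length = R.length w

/-- The (left) weak Bruhat order: some reduced expression of `w₁` is an
initial segment of a reduced expression of `w₂`. -/
noncomputable def weakLE (w₁ w₂ : V ≃ₗᵢ[ℝ] V) : Prop :=
  ∃ l₁ l₂ : List V, R.IsReduced l₁ w₁ ∧ R.IsReduced (l₁ ++ l₂) w₂

end RootSystemData

open RootSystemData
open scoped RealInnerProductSpace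

variable {V : Type*} [NormedAddCommGroup V] [InnerProductSpace ℝ V] [FiniteDimensional ℝ V]

set_option linter.unusedSectionVars false

namespace WeakAux

/-! ### Basic facts about reflections -/

lemma srefl_apply_self (α : V) : srefl α α = -α :=
  Submodule.reflection_orthogonalComplement_singleton_eq_neg α

lemma srefl_mul_self (α : V) : srefl α * srefl α = 1 := by
  ext x
  simp [srefl, LinearIsometryEquiv.coe_mul, Function.comp, Submodule.reflection_involutive _ x]

lemma srefl_inv (α : V) : (srefl α)⁻¹ = srefl α :=
  inv_eq_of_mul_eq_one_left (srefl_mul_self α)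

lemma srefl_srefl (α β : V) : srefl α (srefl α β) = β := by
  have := congrArg (fun (f : V ≃ₗᵢ[ℝ] V) => f β) (srefl_mul_self α)
  simpa using this

lemma refl_congr (K K' : Submodule ℝ V) (h : K = K') :
    (Submodule.reflection K : V ≃ₗᵢ[ℝ] V) = Submodule.reflection K' := by
  subst h; rfl

lemma span_orthogonal_map (u : V ≃ₗᵢ[ℝ] V) (α : V) :
    ((ℝ ∙ α)ᗮ).map (u.toLinearEquiv : V →ₗ[ℝ] V) = (ℝ ∙ (u α))ᗮ := by
  ext x
  rw [Submodule.mem_orthogonal_singleton_iff_inner_right]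
  constructor
  · rintro ⟨y, hy, rfl⟩
    have h0 : ⟪α, y⟫ = 0 := Submodule.mem_orthogonal_singleton_iff_inner_right.mp hy
    simpa [u.inner_map_map] using h0
  · intro hx
    refine ⟨u.symm x, Submodule.mem_orthogonal_singleton_iff_inner_right.mpr ?_, by simp⟩
    rw [← u.inner_map_map]
    simpa using hx

lemma srefl_conj (u : V ≃ₗᵢ[ℝ] V) (α : V) :
    srefl (u α) = u * srefl α * u⁻¹ := by
  have h := Submodule.reflection_map u ((ℝ ∙ α)ᗮ)
  rw [srefl, ← refl_congr _ _ (span_orthogonal_map u α), h]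
  rfl

/-! ### Words and their products -/

noncomputable def wprod (l : List V) : V ≃ₗᵢ[ℝ] V := (l.map srefl).prod

@[simp] lemma wprod_nil : wprod ([] : List V) = 1 := rfl

@[simp] lemma wprod_cons (α : V) (t : List V) : wprod (α :: t) = srefl α * wprod t := by
  simp [wprod]

lemma wprod_append (l₁ l₂ : List V) : wprod (l₁ ++ l₂) = wprod l₁ * wprod l₂ := by
  simp [wprod]

lemma wprod_reverse (l : List V) : wprod l.reverse = (wprod l)⁻¹ := by
  induction l with
  | nil => simp
  | cons α t ih =>
      rw [List.reverse_cons, wprod_append, wprod_cons, ih]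
      simp [srefl_inv, mul_inv_rev]

/-! ### The list of candidate inversions of a word -/

noncomputable def gammaList : List V → List V
  | [] => []
  | α :: t => α :: (gammaList t).map (srefl α)

@[simp] lemma gammaList_nil : gammaList ([] : List V) = [] := rfl

@[simp] lemma gammaList_cons (α : V) (t : List V) :
    gammaList (α :: t) = α :: (gammaList t).map (srefl α) := rfl

lemma gammaList_append (l₁ l₂ : List V) :
    gammaList (l₁ ++ l₂) = gammaList l₁ ++ (gammaList l₂).map (wprod l₁) := by
  induction l₁ with
  | nil => simp
  | cons α t ih =>
      simp only [List.cons_append, gammaList_cons, ih, List.map_append, List.map_map,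
        wprod_cons, List.cons.injEq, true_and]
      rw [LinearIsometryEquiv.coe_mul]

variable {R : RootSystemData V}

lemma simple_move (hR : R.IsGeometric) {α β : V} (hα : α ∈ R.simples) (hβ : β ∈ R.pos) :
    srefl α β ∈ R.pos ∨ β = α := by
  by_cases h : β = α
  · exact Or.inr h
  · exact Or.inl (hR.simple_perm α hα β hβ h)

lemma isWord_iff (l : List V) (w : V ≃ₗᵢ[ℝ] V) :
    R.IsWord l w ↔ (∀ α ∈ l, α ∈ R.simples) ∧ w = wprod l := Iff.rfl

lemma word_eq {l : List V} {w : V ≃ₗᵢ[ℝ] V} (h : R.IsWord l w) : w = wprod l := h.2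

/-- Inversions of `wprod l` occur among the `gammaList`. -/
lemma mem_gammaList_of_inversion (hR : R.IsGeometric) :
    ∀ (l : List V), (∀ α ∈ l, α ∈ R.simples) → ∀ β ∈ R.N (wprod l), β ∈ gammaList l := by
  intro l
  induction l with
  | nil =>
      rintro - β ⟨hβpos, δ, hδ, hδeq⟩
      simp only [wprod_nil, inv_one] at hδeq
      have : β = -δ := by simpa using hδeq.symm
      exact absurd (this ▸ hβpos) (R.not_both δ hδ)
  | cons α t ih =>
      rintro hsimp β ⟨hβpos, δ, hδ, hδeq⟩
      have hα : α ∈ R.simples := hsimp α (by simp)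
      rcases simple_move hR hα hβpos with h | h
      · -- srefl α β positive
        have hkey : (wprod t)⁻¹ (srefl α β) = -δ := by
          have : (wprod (α :: t))⁻¹ β = -δ := by simpa using hδeq.symm
          rw [wprod_cons, mul_inv_rev, srefl_inv] at this
          simpa [LinearIsometryEquiv.coe_mul, Function.comp] using this
        have : srefl α β ∈ R.N (wprod t) := ⟨h, δ, hδ, hkey.symm⟩
        have hmem := ih (fun x hx => hsimp x (by simp [hx])) _ this
        rw [gammaList_cons]
        refine List.mem_cons.mpr (Or.inr ?_)
        refine List.mem_map.mpr ⟨srefl α β, hmem, srefl_srefl α β⟩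
      · subst h
        simp

/-- Exchange: a member of the `gammaList` gives a shorter word after multiplying
by the corresponding reflection. -/
lemma exists_word_of_mem_gammaList :
    ∀ (l : List V), (∀ α ∈ l, α ∈ R.simples) → ∀ β ∈ gammaList l,
      ∃ l' : List V, (∀ α ∈ l', α ∈ R.simples) ∧
        wprod l' = srefl β * wprod l ∧ l'.length + 1 = l.length := by
  intro l
  induction l with
  | nil => rintro - β hβ; simp at hβ
  | cons α t ih =>
      intro hsimp β hβ
      rw [gammaList_cons, List.mem_cons] at hβ
      rcases hβ with rfl | hβ
      · refine ⟨t, fun x hx => hsimp x (by simp [hx]), ?_, by simp⟩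
        rw [wprod_cons, ← mul_assoc, srefl_mul_self, one_mul]
      · obtain ⟨γ, hγ, rfl⟩ := List.mem_map.mp hβ
        obtain ⟨l'', hl''s, hl''p, hl''len⟩ := ih (fun x hx => hsimp x (by simp [hx])) γ hγ
        refine ⟨α :: l'', ?_, ?_, by simpa using hl''len⟩
        · intro x hx
          rcases List.mem_cons.mp hx with rfl | hx
          · exact hsimp x (by simp)
          · exact hl''s x hx
        · rw [wprod_cons, hl''p, srefl_conj (srefl α) γ, srefl_inv, wprod_cons,
            mul_assoc (srefl α * srefl γ) (srefl α),
            ← mul_assoc (srefl α) (srefl α) (wprod t), srefl_mul_self, one_mul, mul_assoc]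

/-- Either all gammas of a word are positive, or the word can be shortened. -/
lemma gamma_pos_or_shorter (hR : R.IsGeometric) :
    ∀ (l : List V), (∀ α ∈ l, α ∈ R.simples) →
      (∀ β ∈ gammaList l, β ∈ R.pos) ∨
      ∃ l' : List V, (∀ α ∈ l', α ∈ R.simples) ∧ wprod l' = wprod l ∧
        l'.length < l.length := by
  intro l
  induction l with
  | nil => exact fun _ => Or.inl (by simp)
  | cons α t ih =>
      intro hsimp
      have hα : α ∈ R.simples := hsimp α (by simp)
      have htsimp : ∀ x ∈ t, x ∈ R.simples := fun x hx => hsimp x (by simp [hx])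
      rcases ih htsimp with hpos | ⟨l'', hs, hp, hlen⟩
      · by_cases hmem : α ∈ gammaList t
        · obtain ⟨l', hl's, hl'p, hl'len⟩ := exists_word_of_mem_gammaList t htsimp α hmem
          refine Or.inr ⟨l', hl's, ?_, by simp only [List.length_cons]; omega⟩
          rw [hl'p, wprod_cons]
        · refine Or.inl ?_
          intro β hβ
          rw [gammaList_cons, List.mem_cons] at hβ
          rcases hβ with rfl | hβ
          · exact R.simples_sub hα
          · obtain ⟨γ, hγ, rfl⟩ := List.mem_map.mp hβ
            have hγpos := hpos γ hγ
            have : γ ≠ α := fun h => hmem (h ▸ hγ)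
            exact hR.simple_perm α hα γ hγpos this
      · exact Or.inr ⟨α :: l'', fun x hx => by
          rcases List.mem_cons.mp hx with rfl | hx
          · exact hα
          · exact hs x hx, by rw [wprod_cons, wprod_cons, hp], by simpa using hlen⟩

/-- If `β` is a gamma of `l` then `-(wprod l)⁻¹ β` is a gamma of `l.reverse`. -/
lemma neg_mem_gammaList_reverse :
    ∀ (l : List V), ∀ β ∈ gammaList l, -((wprod l)⁻¹ β) ∈ gammaList l.reverse := by
  intro l
  induction l with
  | nil => intro β hβ; simp at hβ
  | cons α t ih =>
      intro β hβ
      rw [gammaList_cons, List.mem_cons] at hβ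
      have hrev : gammaList (α :: t).reverse
          = gammaList t.reverse ++ [(wprod t)⁻¹ α] := by
        rw [List.reverse_cons, gammaList_append, wprod_reverse]
        simp
      rcases hβ with rfl | hβ
      · rw [hrev]
        refine List.mem_append.mpr (Or.inr ?_)
        have : (wprod (β :: t))⁻¹ β = (wprod t)⁻¹ (-β) := by
          rw [wprod_cons, mul_inv_rev, srefl_inv]
          simp [LinearIsometryEquiv.coe_mul, Function.comp, srefl_apply_self]
        rw [this]
        simp
      · obtain ⟨γ, hγ, rfl⟩ := List.mem_map.mp hβ
        have : (wprod (α :: t))⁻¹ (srefl α γ) = (wprod t)⁻¹ γ := by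
          rw [wprod_cons, mul_inv_rev, srefl_inv]
          simp [LinearIsometryEquiv.coe_mul, Function.comp, srefl_srefl]
        rw [this, hrev]
        exact List.mem_append.mpr (Or.inl (ih γ hγ))

/-! ### Length facts -/

lemma length_le {l : List V} {w : V ≃ₗᵢ[ℝ] V} (hl : R.IsWord l w) :
    R.length w ≤ l.length :=
  Nat.sInf_le ⟨l, hl, rfl⟩

lemma exists_reduced {w : V ≃ₗᵢ[ℝ] V} (h : ∃ l, R.IsWord l w) :
    ∃ l, R.IsReduced l w := by
  obtain ⟨l, hl⟩ := h
  have hne : {n | ∃ l : List V, R.IsWord l w ∧ l.length = n}.Nonempty := ⟨l.length, l, hl, rfl⟩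
  obtain ⟨l', hl', hlen⟩ := Nat.sInf_mem hne
  exact ⟨l', hl', hlen⟩

lemma reverse_word {l : List V} {w : V ≃ₗᵢ[ℝ] V} (hl : R.IsWord l w) :
    R.IsWord l.reverse w⁻¹ := by
  refine ⟨fun x hx => hl.1 x (List.mem_reverse.mp hx), ?_⟩
  have : w = wprod l := hl.2
  rw [this, ← wprod_reverse]
  rfl

lemma exists_word_of_mem_W {w : V ≃ₗᵢ[ℝ] V} (hw : w ∈ R.W) : ∃ l, R.IsWord l w := by
  induction hw using Subgroup.closure_induction with
  | mem g hg =>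
      obtain ⟨α, hα, rfl⟩ := hg
      refine ⟨[α], fun x hx => ?_, by simp⟩
      rw [List.mem_singleton] at hx
      subst hx
      exact hα
  | one => exact ⟨[], by simp, rfl⟩
  | mul x y _ _ hx hy =>
      obtain ⟨lx, hlx⟩ := hx
      obtain ⟨ly, hly⟩ := hy
      refine ⟨lx ++ ly, fun a ha => ?_, ?_⟩
      · rcases List.mem_append.mp ha with h | h
        · exact hlx.1 a h
        · exact hly.1 a h
      · have : wprod (lx ++ ly) = wprod lx * wprod ly := wprod_append lx ly
        rw [hlx.2, hly.2]
        exact this.symm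
  | inv x _ hx =>
      obtain ⟨lx, hlx⟩ := hx
      exact ⟨lx.reverse, reverse_word hlx⟩

lemma gamma_pos_of_reduced (hR : R.IsGeometric) {l : List V} {w : V ≃ₗᵢ[ℝ] V}
    (hl : R.IsReduced l w) : ∀ β ∈ gammaList l, β ∈ R.pos := by
  rcases gamma_pos_or_shorter hR l hl.1.1 with h | ⟨l', hs, hp, hlen⟩
  · exact h
  · exfalso
    have : R.IsWord l' w := ⟨hs, by rw [hl.1.2]; exact hp.symm⟩
    have h1 := length_le this
    have h2 := hl.2
    omega

lemma length_inv {w : V ≃ₗᵢ[ℝ] V} (hw : ∃ l, R.IsWord l w) :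
    R.length w⁻¹ = R.length w := by
  obtain ⟨l, hl⟩ := exists_reduced hw
  obtain ⟨m, hm⟩ := exists_reduced ⟨l.reverse, reverse_word hl.1⟩
  have h1 : R.length w⁻¹ ≤ R.length w := by
    have := length_le (reverse_word hl.1)
    simpa [hl.2] using this
  have h2 : R.length w ≤ R.length w⁻¹ := by
    have hrev : R.IsWord m.reverse w := by
      have := reverse_word hm.1
      simpa using this
    have := length_le hrev
    simpa [hm.2] using this
  omega

lemma reverse_reduced {l : List V} {w : V ≃ₗᵢ[ℝ] V} (hl : R.IsReduced l w) :
    R.IsReduced l.reverse w⁻¹ := by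
  refine ⟨reverse_word hl.1, ?_⟩
  rw [List.length_reverse, hl.2, length_inv ⟨l, hl.1⟩]

/-- Every gamma of a reduced word for `w` is an inversion of `w`. -/
lemma mem_N_of_mem_gammaList (hR : R.IsGeometric) {l : List V} {w : V ≃ₗᵢ[ℝ] V}
    (hl : R.IsReduced l w) : ∀ β ∈ gammaList l, β ∈ R.N w := by
  intro β hβ
  refine ⟨gamma_pos_of_reduced hR hl β hβ, ?_⟩
  have h1 : -((wprod l)⁻¹ β) ∈ gammaList l.reverse := neg_mem_gammaList_reverse l β hβ
  have h2 : -((wprod l)⁻¹ β) ∈ R.pos :=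
    gamma_pos_of_reduced hR (reverse_reduced hl) _ h1
  have hw : w = wprod l := word_eq hl.1
  refine ⟨-((wprod l)⁻¹ β), h2, ?_⟩
  rw [hw]
  simp

/-- The inversion set of `w` with reduced word `l` is exactly the gammas. -/
lemma N_eq_gammaList (hR : R.IsGeometric) {l : List V} {w : V ≃ₗᵢ[ℝ] V}
    (hl : R.IsReduced l w) : R.N w = {β | β ∈ gammaList l} := by
  ext β
  constructor
  · intro hβ
    have hw : w = wprod l := word_eq hl.1
    exact mem_gammaList_of_inversion hR l hl.1.1 β (hw ▸ hβ)
  · intro hβ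
    exact mem_N_of_mem_gammaList hR hl β hβ

/-! ### The key step for the backward direction -/

lemma N_srefl_mul_subset (hR : R.IsGeometric) {α : V} {w₁ w₂ : V ≃ₗᵢ[ℝ] V}
    (hα : α ∈ R.simples) (hαw₁ : α ∈ R.N w₁) (h : R.N w₁ ⊆ R.N w₂) :
    R.N (srefl α * w₁) ⊆ R.N (srefl α * w₂) := by
  rintro β ⟨hβpos, δ, hδ, hδeq⟩
  have hkey : w₁⁻¹ (srefl α β) = -δ := by
    rw [mul_inv_rev, srefl_inv] at hδeq
    simpa [LinearIsometryEquiv.coe_mul, Function.comp] using hδeq.symm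
  rcases simple_move hR hα hβpos with hs | hs
  · have : srefl α β ∈ R.N w₁ := ⟨hs, δ, hδ, hkey.symm⟩
    obtain ⟨hspos, δ', hδ', hδ'eq⟩ := h this
    refine ⟨hβpos, δ', hδ', ?_⟩
    rw [mul_inv_rev, srefl_inv]
    simpa [LinearIsometryEquiv.coe_mul, Function.comp] using hδ'eq
  · exfalso
    subst hs
    obtain ⟨hβ', δ'', hδ'', hδ''eq⟩ := hαw₁
    -- w₁⁻¹ β = -δ''  and  w₁⁻¹ (srefl β β) = w₁⁻¹ (-β) = -(w₁⁻¹ β) = δ'' = -δ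
    have h1 : w₁⁻¹ β = -δ'' := hδ''eq.symm
    have h2 : w₁⁻¹ (srefl β β) = -δ := hkey
    rw [srefl_apply_self] at h2
    have h3 : -(w₁⁻¹ β) = -δ := by rw [← h2]; simp
    rw [h1, neg_neg] at h3
    subst h3
    exact R.not_both δ hδ hδ''

/-! ### Main theorem pieces -/

lemma forward (hR : R.IsGeometric) {w₁ w₂ : V ≃ₗᵢ[ℝ] V} (h : R.weakLE w₁ w₂) :
    R.N w₁ ⊆ R.N w₂ := by
  obtain ⟨l₁, l₂, h₁, h₂⟩ := h
  intro β hβ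
  have hβg : β ∈ gammaList l₁ :=
    mem_gammaList_of_inversion hR l₁ h₁.1.1 β ((word_eq h₁.1) ▸ hβ)
  have : β ∈ gammaList (l₁ ++ l₂) := by
    rw [gammaList_append]
    exact List.mem_append.mpr (Or.inl hβg)
  exact mem_N_of_mem_gammaList hR h₂ β this

lemma backward (hR : R.IsGeometric) :
    ∀ n (w₁ w₂ : V ≃ₗᵢ[ℝ] V), w₁ ∈ R.W → w₂ ∈ R.W → R.length w₁ = n →
      R.N w₁ ⊆ R.N w₂ → R.weakLE w₁ w₂ := by
  intro n
  induction n using Nat.strong_induction_on with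
  | _ n IH =>
      intro w₁ w₂ hw₁ hw₂ hlen hsub
      obtain ⟨l, hl⟩ := exists_reduced (exists_word_of_mem_W hw₁)
      match l, hl with
      | [], hl =>
          obtain ⟨m, hm⟩ := exists_reduced (exists_word_of_mem_W hw₂)
          refine ⟨[], m, hl, by simpa using hm⟩
      | α :: t, hl =>
          have hα : α ∈ R.simples := hl.1.1 α (by simp)
          have hαN₁ : α ∈ R.N w₁ :=
            mem_N_of_mem_gammaList hR hl α (by simp)
          have hαN₂ : α ∈ R.N w₂ := hsub hαN₁
          set s := srefl α with hs
          set u₁ := s * w₁ with hu₁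
          set u₂ := s * w₂ with hu₂
          have hsW : s ∈ R.W := Subgroup.subset_closure ⟨α, hα, rfl⟩
          have hu₁W : u₁ ∈ R.W := mul_mem hsW hw₁
          have hu₂W : u₂ ∈ R.W := mul_mem hsW hw₂
          -- t is a word for u₁
          have htword : R.IsWord t u₁ := by
            refine ⟨fun x hx => hl.1.1 x (by simp [hx]), ?_⟩
            show u₁ = wprod t
            rw [hu₁, word_eq hl.1, wprod_cons, hs, ← mul_assoc, srefl_mul_self, one_mul]
          -- length w ≤ 1 + length (s * w) for any w with word
          have hlb : ∀ w : V ≃ₗᵢ[ℝ] V, (∃ l₀, R.IsWord l₀ (s * w)) →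
              R.length w ≤ R.length (s * w) + 1 := by
            intro w hw
            obtain ⟨m, hm⟩ := exists_reduced hw
            have : R.IsWord (α :: m) w := by
              refine ⟨fun x hx => ?_, ?_⟩
              · rcases List.mem_cons.mp hx with rfl | hx
                · exact hα
                · exact hm.1.1 x hx
              · have : wprod (α :: m) = s * wprod m := by rw [wprod_cons, hs]
                rw [show (wprod m : V ≃ₗᵢ[ℝ] V) = s * w from hm.1.2 ▸ rfl] at this
                rw [← mul_assoc, hs, srefl_mul_self, one_mul] at this
                exact this.symm
            have := length_le this
            simpa [hm.2] using this
          have hu₁len : R.length u₁ = t.length := by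
            have h1 : R.length u₁ ≤ t.length := length_le htword
            have h2 : R.length w₁ ≤ R.length u₁ + 1 := hlb w₁ ⟨t, htword⟩
            have h3 : (α :: t).length = R.length w₁ := hl.2
            simp only [List.length_cons] at h3
            omega
          have htred : R.IsReduced t u₁ := ⟨htword, hu₁len.symm⟩
          have hu₁lt : R.length u₁ < n := by
            have h3 : (α :: t).length = R.length w₁ := hl.2
            simp only [List.length_cons] at h3
            omega
          -- length u₂ + 1 = length w₂
          obtain ⟨m₂, hm₂⟩ := exists_reduced (exists_word_of_mem_W hw₂)
          have hαg : α ∈ gammaList m₂ :=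
            mem_gammaList_of_inversion hR m₂ hm₂.1.1 α ((word_eq hm₂.1) ▸ hαN₂)
          obtain ⟨m₂', hm₂'s, hm₂'p, hm₂'len⟩ :=
            exists_word_of_mem_gammaList m₂ hm₂.1.1 α hαg
          have hu₂word : R.IsWord m₂' u₂ := by
            refine ⟨hm₂'s, ?_⟩
            rw [hu₂, hm₂.1.2, hs]
            exact hm₂'p.symm
          have hu₂len : R.length u₂ + 1 = R.length w₂ := by
            have h1 : R.length u₂ ≤ m₂'.length := length_le hu₂word
            have h2 : R.length w₂ ≤ R.length u₂ + 1 := hlb w₂ ⟨m₂', hu₂word⟩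
            have h3 : m₂.length = R.length w₂ := hm₂.2
            omega
          -- the inclusion of inversion sets for s*w₁ ⊆ s*w₂
          have hsubs : R.N u₁ ⊆ R.N u₂ := N_srefl_mul_subset hR hα hαN₁ hsub
          obtain ⟨n₁, n₂, hn₁, hn₂⟩ :=
            IH (R.length u₁) hu₁lt u₁ u₂ hu₁W hu₂W rfl hsubs
          -- assemble
          refine ⟨α :: n₁, n₂, ?_, ?_⟩
          · refine ⟨⟨fun x hx => ?_, ?_⟩, ?_⟩
            · rcases List.mem_cons.mp hx with rfl | hx
              · exact hα
              · exact hn₁.1.1 x hx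
            · have : wprod n₁ = u₁ := hn₁.1.2.symm
              show w₁ = (List.map srefl (α :: n₁)).prod
              have e : (List.map srefl (α :: n₁)).prod = srefl α * wprod n₁ := by
                simp [wprod]
              rw [e, this, hu₁, hs, ← mul_assoc, srefl_mul_self, one_mul]
            · have h3 : (α :: t).length = R.length w₁ := hl.2
              simp only [List.length_cons] at h3 ⊢
              have : n₁.length = R.length u₁ := hn₁.2
              omega
          · refine ⟨⟨fun x hx => ?_, ?_⟩, ?_⟩
            · simp only [List.cons_append, List.mem_cons, List.mem_append] at hx
              rcases hx with rfl | hx | hx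
              · exact hα
              · exact hn₂.1.1 x (List.mem_append.mpr (Or.inl hx))
              · exact hn₂.1.1 x (List.mem_append.mpr (Or.inr hx))
            · have : wprod (n₁ ++ n₂) = u₂ := hn₂.1.2.symm
              show w₂ = (List.map srefl ((α :: n₁) ++ n₂)).prod
              have e : (List.map srefl ((α :: n₁) ++ n₂)).prod
                  = srefl α * wprod (n₁ ++ n₂) := by
                simp [wprod]
              rw [e, this, hu₂, hs, ← mul_assoc, srefl_mul_self, one_mul]
            · have : (n₁ ++ n₂).length = R.length u₂ := hn₂.2
              simp only [List.length_append, List.length_cons] at this ⊢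
              omega

end WeakAux

/-- `w₁ ≤ w₂` in the weak left Bruhat order iff `N(w₁) ⊆ N(w₂)`. -/
theorem weak_order_iff_inversion_subset (R : RootSystemData V) (hR : R.IsGeometric)
    (w₁ w₂ : V ≃ₗᵢ[ℝ] V) (hw₁ : w₁ ∈ R.W) (hw₂ : w₂ ∈ R.W) :
    R.weakLE w₁ w₂ ↔ R.N w₁ ⊆ R.N w₂ :=
  ⟨WeakAux.forward hR, WeakAux.backward hR (R.length w₁) w₁ w₂ hw₁ hw₂ rfl⟩
end

section
/- Let R be a finite irreducible root system with highest root θ, and let α be a long simple root. Then the minimal-length element y_α ∈ W(R) with y_α(α) = θ satisfies ℓ(y_α) = g_R − 2, where g_R is the dual Coxeter number of R. -/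
open scoped RealInnerProductSpace

set_option linter.unusedSectionVars false
namespace RootSystemData

variable {V : Type*} [NormedAddCommGroup V] [InnerProductSpace ℝ V]
  [FiniteDimensional ℝ V]

lemma srefl_apply (β v : V) : srefl β v = v - (2 * ⟪β, v⟫ / ‖β‖ ^ 2) • β := by
  rw [srefl, Submodule.reflection_orthogonal_apply, Submodule.reflection_singleton_apply]
  simp only [RCLike.ofReal_real_eq_id, id_eq]
  match_scalars <;> ring

lemma srefl_srefl (β v : V) : srefl β (srefl β v) = v := Submodule.reflection_reflection _ v

lemma srefl_self {β : V} (hβ : β ≠ 0) : srefl β β = -β := by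
  have h : ‖β‖ ^ 2 ≠ 0 := pow_ne_zero _ (norm_ne_zero_iff.2 hβ)
  rw [srefl_apply, real_inner_self_eq_norm_sq, mul_div_assoc, div_self h]
  module

end RootSystemData
namespace RootSystemData

variable {V : Type*} [NormedAddCommGroup V] [InnerProductSpace ℝ V]
  [FiniteDimensional ℝ V] {R : RootSystemData V}

lemma root_ne_zero {v : V} (hv : v ∈ R.roots) : v ≠ 0 := R.ne_zero v hv

lemma simple_ne_zero {b : V} (hb : b ∈ R.simples) : b ≠ 0 :=
  root_ne_zero (R.pos_sub (R.simples_sub hb))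

/-- Existence of `ρ` with `⟪ρ, β⟫ = ‖β‖²/2` for all simple `β`. -/
lemma exists_rho (hR : R.IsGeometric) (hfin : R.roots.Finite) :
    ∃ ρ : V, ∀ β ∈ R.simples, 2 * ⟪ρ, β⟫ = ‖β‖ ^ 2 := by
  have hposfin : R.pos.Finite := hfin.subset R.pos_sub
  set P : Finset V := hposfin.toFinset with hP
  classical
  refine ⟨(2 : ℝ)⁻¹ • ∑ γ ∈ P, γ, ?_⟩
  intro β hβ
  have hβpos : β ∈ R.pos := R.simples_sub hβ
  have hβne : β ≠ 0 := simple_ne_zero hβ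
  have hmem : β ∈ P := by rw [hP, Set.Finite.mem_toFinset]; exact hβpos
  have hstep : ∀ γ ∈ P.erase β, srefl β γ ∈ P.erase β := by
    intro γ hγ
    rw [Finset.mem_erase] at hγ ⊢
    obtain ⟨hγne, hγP⟩ := hγ
    rw [hP, Set.Finite.mem_toFinset] at hγP ⊢
    refine ⟨?_, hR.simple_perm β hβ γ hγP hγne⟩
    intro hEq
    have : γ = srefl β β := by rw [← srefl_srefl β γ, hEq]
    rw [srefl_self hβne] at this
    exact R.not_both β hβpos (this ▸ hγP)
  have key : ∑ γ ∈ P.erase β, srefl β γ = ∑ γ ∈ P.erase β, γ := by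
    refine Finset.sum_nbij' (i := fun γ => srefl β γ) (j := fun γ => srefl β γ)
      hstep hstep (fun γ _ => srefl_srefl β γ) (fun γ _ => srefl_srefl β γ)
      (fun γ _ => rfl)
  have hsum : srefl β (∑ γ ∈ P, γ) = (∑ γ ∈ P, γ) - (2 : ℝ) • β := by
    rw [← Finset.add_sum_erase _ _ hmem, map_add, map_sum, key, srefl_self hβne]
    module
  have hrefl : srefl β ((2:ℝ)⁻¹ • ∑ γ ∈ P, γ) = (2:ℝ)⁻¹ • (∑ γ ∈ P, γ) - β := by
    rw [map_smul, hsum]; module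
  rw [srefl_apply] at hrefl
  have hco : (2 * ⟪β, (2:ℝ)⁻¹ • ∑ γ ∈ P, γ⟫ / ‖β‖ ^ 2) • β = (1 : ℝ) • β := by
    have := sub_eq_sub_iff_sub_eq_sub.mp hrefl
    rw [one_smul]
    linear_combination (norm := module) -this
  have hβ2 : ‖β‖ ^ 2 ≠ 0 := pow_ne_zero _ (norm_ne_zero_iff.2 hβne)
  have := smul_left_injective ℝ hβne (hco)
  rw [div_eq_one_iff_eq hβ2] at this
  rw [real_inner_comm]
  exact this

/-- Inner products with any `ρ` as above are positive on the positive cone. -/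
lemma rho_inner_pos {ρ : V} (hρ : ∀ β ∈ R.simples, 2 * ⟪ρ, β⟫ = ‖β‖ ^ 2)
    {v : V} (hv : v ∈ AddSubmonoid.closure R.simples) :
    0 ≤ ⟪ρ, v⟫ ∧ (⟪ρ, v⟫ = 0 → v = 0) := by
  induction hv using AddSubmonoid.closure_induction with
  | mem x hx =>
      have h1 := hρ x hx
      have h2 : (0:ℝ) < ‖x‖ ^ 2 :=
        pow_pos (norm_pos_iff.2 (simple_ne_zero hx)) 2
      constructor
      · nlinarith
      · intro h0; rw [h0] at h1; nlinarith
  | zero =>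
      constructor
      · rw [inner_zero_right]
      · intro _; rfl
  | add x y hx hy ihx ihy =>
      rw [inner_add_right]
      constructor
      · exact add_nonneg ihx.1 ihy.1
      · intro h0
        have hx0 : ⟪ρ, x⟫ = 0 := le_antisymm (by linarith [ihy.1]) ihx.1
        have hy0 : ⟪ρ, y⟫ = 0 := by linarith
        rw [ihx.2 hx0, ihy.2 hy0, add_zero]

end RootSystemData
namespace RootSystemData

variable {V : Type*} [NormedAddCommGroup V] [InnerProductSpace ℝ V]
  [FiniteDimensional ℝ V] {R : RootSystemData V}

lemma simple_mem_roots {b : V} (hb : b ∈ R.simples) : b ∈ R.roots :=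
  R.pos_sub (R.simples_sub hb)

lemma inner_rho_srefl {ρ : V} (hρ : ∀ β ∈ R.simples, 2 * ⟪ρ, β⟫ = ‖β‖ ^ 2)
    {b : V} (hb : b ∈ R.simples) (v : V) :
    ⟪ρ, srefl b v⟫ = ⟪ρ, v⟫ - ⟪b, v⟫ := by
  have hb2 : ‖b‖ ^ 2 ≠ 0 := pow_ne_zero _ (norm_ne_zero_iff.2 (simple_ne_zero hb))
  have h1 := hρ b hb
  rw [srefl_apply, inner_sub_right, real_inner_smul_right]
  have h2 : 2 * ⟪b, v⟫ / ‖b‖ ^ 2 * ⟪ρ, b⟫ = ⟪b, v⟫ := by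
    rw [div_mul_eq_mul_div, div_eq_iff hb2]; linear_combination ⟪b, v⟫ * h1
  rw [h2]

/-- Key dichotomy: either the inner product is at most `A/2` in absolute
value, or the reflection is just negation. -/
lemma step_cases (hcrys : ∀ a ∈ R.roots, ∀ b ∈ R.roots, ∃ n : ℤ, 2 * ⟪a, b⟫ / ⟪a, a⟫ = (n : ℝ))
    {α₀ : V} (hα₀ : α₀ ∈ R.roots) (hlong : ∀ β ∈ R.roots, ‖β‖ ≤ ‖α₀‖)
    {b : V} (hb : b ∈ R.simples) {v : V} (hvr : v ∈ R.roots) (hv : ‖v‖ = ‖α₀‖) :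
    |⟪b, v⟫| ≤ ‖α₀‖ ^ 2 / 2 ∨ srefl b v = -v := by
  set A : ℝ := ‖α₀‖ ^ 2 with hA
  have hApos : 0 < A := pow_pos (norm_pos_iff.2 (root_ne_zero hα₀)) 2
  have hvv : ⟪v, v⟫ = A := by rw [real_inner_self_eq_norm_sq, hv]
  have hvsq : ‖v‖ ^ 2 = A := by rw [hv]
  obtain ⟨n, hn⟩ := hcrys v hvr b (simple_mem_roots hb)
  rw [hvv] at hn
  have hbv : ⟪b, v⟫ = n * A / 2 := by
    rw [real_inner_comm]
    field_simp [hApos.ne'] at hn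
    linarith
  have hCS : |⟪b, v⟫| ≤ ‖b‖ * ‖v‖ := abs_real_inner_le_norm b v
  have hbn : ‖b‖ ≤ ‖α₀‖ := hlong b (simple_mem_roots hb)
  have hCS2 : ‖b‖ * ‖v‖ ≤ A := by
    rw [hA, pow_two, hv]
    exact mul_le_mul_of_nonneg_right hbn (norm_nonneg _)
  have habs : |⟪b, v⟫| = |(n : ℝ)| * A / 2 := by
    rw [hbv, abs_div, abs_mul, abs_of_pos hApos]
    norm_num
  by_cases hn1 : |(n : ℝ)| ≤ 1
  · left
    rw [habs]
    nlinarith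
  · right
    have hn2' : (2 : ℝ) ≤ |(n : ℝ)| := by
      have : (1 : ℤ) < |n| := by
        by_contra hcon
        push_neg at hcon
        apply hn1
        rw [← Int.cast_abs]
        exact_mod_cast hcon
      rw [← Int.cast_abs]
      exact_mod_cast this
    have heq : |⟪b, v⟫| = A := by
      have h1 : A ≤ |⟪b, v⟫| := by rw [habs]; nlinarith
      linarith [hCS.trans hCS2]
    have hnorm : ‖b‖ = ‖v‖ := by
      have h1 : A ≤ ‖b‖ * ‖v‖ := heq ▸ hCS
      have h2 : ‖b‖ * ‖v‖ = A := le_antisymm hCS2 h1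
      have hv0 : (0:ℝ) < ‖v‖ := norm_pos_iff.2 (root_ne_zero hvr)
      have h3 : ‖b‖ * ‖v‖ = ‖v‖ * ‖v‖ := by rw [h2, ← hvsq]; ring
      exact mul_right_cancel₀ hv0.ne' h3
    rcases (abs_eq (le_of_lt hApos)).1 heq with hpa | hpa
    · have hbev : b = v := by
        have h0 : ‖b - v‖ ^ 2 = 0 := by
          rw [norm_sub_sq_real, hnorm, hvsq]
          linarith [real_inner_comm b v]
        have h1 := (pow_eq_zero_iff (n := 2) (by norm_num)).1 h0
        rw [norm_eq_zero] at h1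
        exact sub_eq_zero.1 h1
      rw [hbev]
      exact srefl_self (root_ne_zero hvr)
    · have hbev : b = -v := by
        have h0 : ‖b + v‖ ^ 2 = 0 := by
          rw [norm_add_sq_real, hnorm, hvsq]
          linarith [real_inner_comm b v]
        have h1 := (pow_eq_zero_iff (n := 2) (by norm_num)).1 h0
        rw [norm_eq_zero] at h1
        exact eq_neg_of_add_eq_zero_left h1
      rw [srefl_apply, hbev]
      have hbn2 : ‖(-v : V)‖ ^ 2 = A := by rw [norm_neg, hvsq]
      rw [hbn2, inner_neg_left, hvv]
      have h4 : 2 * -A / A = -2 := by field_simp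
      rw [h4]
      module

end RootSystemData
namespace RootSystemData

variable {V : Type*} [NormedAddCommGroup V] [InnerProductSpace ℝ V]
  [FiniteDimensional ℝ V] {R : RootSystemData V}

lemma prod_cons_apply (b : V) (l : List V) (v : V) :
    (((b :: l).map srefl).prod) v = srefl b (((l.map srefl).prod) v) := by
  rw [List.map_cons, List.prod_cons, LinearIsometryEquiv.coe_mul, Function.comp_apply]

lemma prod_append_apply (l₁ l₂ : List V) (v : V) :
    (((l₁ ++ l₂).map srefl).prod) v
      = ((l₁.map srefl).prod) (((l₂.map srefl).prod) v) := by
  rw [List.map_append, List.prod_append, LinearIsometryEquiv.coe_mul, Function.comp_apply]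

lemma prod_mem_roots (hR : R.IsGeometric) (l : List V) (hl : ∀ b ∈ l, b ∈ R.simples)
    {v : V} (hv : v ∈ R.roots) : ((l.map srefl).prod) v ∈ R.roots := by
  induction l with
  | nil => simpa using hv
  | cons b t ih =>
      rw [prod_cons_apply]
      exact hR.refl_stable b (simple_mem_roots (hl b List.mem_cons_self))
        _ (ih fun x hx => hl x (List.mem_cons_of_mem _ hx))

lemma prod_norm_map (l : List V) (v : V) :
    ‖((l.map srefl).prod) v‖ = ‖v‖ := by
  induction l with
  | nil => simp
  | cons b t ih => rw [prod_cons_apply, LinearIsometryEquiv.norm_map, ih]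

/-- Lower bound: a word of length `n` can move the `ρ`-pairing by at most `n·A/2`. -/
lemma word_bound (hR : R.IsGeometric)
    (hcrys : ∀ a ∈ R.roots, ∀ b ∈ R.roots, ∃ n : ℤ, 2 * ⟪a, b⟫ / ⟪a, a⟫ = (n : ℝ))
    {α₀ : V} (hα₀ : α₀ ∈ R.roots) (hlong : ∀ β ∈ R.roots, ‖β‖ ≤ ‖α₀‖)
    {ρ : V} (hρ : ∀ β ∈ R.simples, 2 * ⟪ρ, β⟫ = ‖β‖ ^ 2)
    (l : List V) (hl : ∀ b ∈ l, b ∈ R.simples)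
    {v : V} (hvr : v ∈ R.roots) (hv : ‖v‖ = ‖α₀‖) :
    |⟪ρ, ((l.map srefl).prod) v⟫| ≤ |⟪ρ, v⟫| + l.length * (‖α₀‖ ^ 2 / 2) := by
  induction l with
  | nil => simp
  | cons b t ih =>
      have ht : ∀ x ∈ t, x ∈ R.simples := fun x hx => hl x (List.mem_cons_of_mem _ hx)
      have hb : b ∈ R.simples := hl b List.mem_cons_self
      set w := ((t.map srefl).prod) v with hw
      have hwr : w ∈ R.roots := prod_mem_roots hR t ht hvr
      have hwn : ‖w‖ = ‖α₀‖ := by rw [hw, prod_norm_map, hv]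
      have hstep : |⟪ρ, srefl b w⟫| ≤ |⟪ρ, w⟫| + ‖α₀‖ ^ 2 / 2 := by
        rcases step_cases hcrys hα₀ hlong hb hwr hwn with hc | hc
        · rw [inner_rho_srefl hρ hb]
          calc |⟪ρ, w⟫ - ⟪b, w⟫| ≤ |⟪ρ, w⟫| + |⟪b, w⟫| := abs_sub _ _
            _ ≤ |⟪ρ, w⟫| + ‖α₀‖ ^ 2 / 2 := by linarith
        · rw [hc, inner_neg_right, abs_neg]
          have hApos : (0:ℝ) ≤ ‖α₀‖ ^ 2 / 2 := by positivity
          linarith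
      rw [prod_cons_apply, ← hw]
      refine hstep.trans ?_
      have h5 := ih ht
      simp only [List.length_cons]
      push_cast
      linarith

/-- Extract a simple root pairing negatively with `v` out of a positive
combination which pairs negatively. -/
lemma exists_neg_inner {v x : V} (hx : x ∈ AddSubmonoid.closure R.simples)
    (hxv : ⟪x, v⟫ < 0) : ∃ b ∈ R.simples, ⟪b, v⟫ < 0 := by
  induction hx using AddSubmonoid.closure_induction with
  | mem y hy => exact ⟨y, hy, hxv⟩
  | zero => rw [inner_zero_left] at hxv; linarith
  | add y z hy hz ihy ihz =>
      rw [inner_add_left] at hxv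
      rcases lt_or_ge (⟪y, v⟫ : ℝ) 0 with h | h
      · exact ihy h
      · exact ihz (by linarith)

/-- The exact upward step. -/
lemma step_up (hR : R.IsGeometric)
    (hcrys : ∀ a ∈ R.roots, ∀ b ∈ R.roots, ∃ n : ℤ, 2 * ⟪a, b⟫ / ⟪a, a⟫ = (n : ℝ))
    {α₀ : V} (hα₀ : α₀ ∈ R.roots) (hlong : ∀ β ∈ R.roots, ‖β‖ ≤ ‖α₀‖)
    {b : V} (hb : b ∈ R.simples) {v : V} (hvp : v ∈ R.pos) (hv : ‖v‖ = ‖α₀‖)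
    (hbv : ⟪b, v⟫ < 0) :
    srefl b v ∈ R.pos ∧ ⟪b, v⟫ = -(‖α₀‖ ^ 2 / 2) := by
  set A : ℝ := ‖α₀‖ ^ 2 with hA
  have hApos : 0 < A := pow_pos (norm_pos_iff.2 (root_ne_zero hα₀)) 2
  have hvr : v ∈ R.roots := R.pos_sub hvp
  have hvv : ⟪v, v⟫ = A := by rw [real_inner_self_eq_norm_sq, hv]
  obtain ⟨n, hn⟩ := hcrys v hvr b (simple_mem_roots hb)
  rw [hvv] at hn
  have hbv' : ⟪b, v⟫ = n * A / 2 := by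
    rw [real_inner_comm]
    field_simp [hApos.ne'] at hn
    linarith
  have hCS : |⟪b, v⟫| ≤ ‖b‖ * ‖v‖ := abs_real_inner_le_norm b v
  have hbn : ‖b‖ ≤ ‖α₀‖ := hlong b (simple_mem_roots hb)
  have hCS2 : ‖b‖ * ‖v‖ ≤ A := by
    rw [hA, pow_two, hv]
    exact mul_le_mul_of_nonneg_right hbn (norm_nonneg _)
  have hnneg : (n : ℝ) < 0 := by
    by_contra hcon
    push_neg at hcon
    nlinarith
  have hne2 : (n : ℝ) ≠ -2 := by
    intro h2
    -- then ⟪b,v⟫ = -A and b = -v, contradicting positivity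
    have hbvA : ⟪b, v⟫ = -A := by rw [hbv', h2]; ring
    have hnorm : ‖b‖ = ‖v‖ := by
      have h1 : A ≤ ‖b‖ * ‖v‖ := by
        calc A = |⟪b, v⟫| := by rw [hbvA, abs_neg, abs_of_pos hApos]
          _ ≤ ‖b‖ * ‖v‖ := hCS
      have h2' : ‖b‖ * ‖v‖ = A := le_antisymm hCS2 h1
      have hv0 : (0:ℝ) < ‖v‖ := norm_pos_iff.2 (root_ne_zero hvr)
      have hvsq : ‖v‖ ^ 2 = A := by rw [hv]
      have h3 : ‖b‖ * ‖v‖ = ‖v‖ * ‖v‖ := by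
        rw [h2', ← hvsq]; ring
      exact mul_right_cancel₀ hv0.ne' h3
    have hbev : b = -v := by
      have h0 : ‖b + v‖ ^ 2 = 0 := by
        rw [norm_add_sq_real, hnorm, hv, ← hA]
        linarith [real_inner_comm b v]
      have h1 := (pow_eq_zero_iff (n := 2) (by norm_num)).1 h0
      rw [norm_eq_zero] at h1
      exact eq_neg_of_add_eq_zero_left h1
    have : -b = v := by rw [hbev]; simp
    exact R.not_both b (R.simples_sub hb) (this ▸ hvp)
  have hge : (-2 : ℝ) ≤ (n : ℝ) := by
    by_contra hcon
    push_neg at hcon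
    have : |⟪b, v⟫| = -(n : ℝ) * A / 2 := by
      rw [hbv', abs_div, abs_mul, abs_of_pos hApos, abs_of_neg hnneg]
      norm_num
    nlinarith [hCS.trans hCS2]
  have hn1 : (n : ℝ) = -1 := by
    have h1 : n < 0 := by exact_mod_cast hnneg
    have h2 : (-2 : ℤ) ≤ n := by exact_mod_cast hge
    have h3 : n ≠ -2 := fun h => hne2 (by exact_mod_cast congrArg (Int.cast : ℤ → ℝ) h)
    have : n = -1 := by omega
    exact_mod_cast this
  have hval : ⟪b, v⟫ = -(A / 2) := by rw [hbv', hn1]; ring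
  refine ⟨?_, hval⟩
  have hvb : v ≠ b := by
    intro h
    rw [h, real_inner_self_eq_norm_sq] at hbv
    nlinarith [pow_pos (norm_pos_iff.2 (simple_ne_zero hb)) 2]
  exact hR.simple_perm b hb v hvp hvb

end RootSystemData
namespace RootSystemData

variable {V : Type*} [NormedAddCommGroup V] [InnerProductSpace ℝ V]
  [FiniteDimensional ℝ V] {R : RootSystemData V}

/-- The chain construction: from any long positive root `v` one can reach `θ`
by simple reflections, each raising the `ρ`-pairing by exactly `A/2`. -/
lemma chain (hR : R.IsGeometric)
    (hcrys : ∀ a ∈ R.roots, ∀ b ∈ R.roots, ∃ n : ℤ, 2 * ⟪a, b⟫ / ⟪a, a⟫ = (n : ℝ))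
    {α₀ : V} (hα₀ : α₀ ∈ R.roots) (hlong : ∀ β ∈ R.roots, ‖β‖ ≤ ‖α₀‖)
    {ρ : V} (hρ : ∀ β ∈ R.simples, 2 * ⟪ρ, β⟫ = ‖β‖ ^ 2)
    {θ : V} (hθpos : θ ∈ R.pos) (hθn : ‖θ‖ = ‖α₀‖)
    (hθhigh : ∀ a ∈ R.roots, θ - a ∈ AddSubmonoid.closure R.simples) :
    ∀ n : ℕ, ∀ v, v ∈ R.pos → ‖v‖ = ‖α₀‖ →
      ⟪ρ, θ⟫ - ⟪ρ, v⟫ ≤ n * (‖α₀‖ ^ 2 / 2) →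
      ∃ l : List V, (∀ b ∈ l, b ∈ R.simples) ∧ ((l.map srefl).prod) v = θ ∧
        (l.length : ℝ) * (‖α₀‖ ^ 2 / 2) = ⟪ρ, θ⟫ - ⟪ρ, v⟫ := by
  have hApos : (0:ℝ) < ‖α₀‖ ^ 2 := pow_pos (norm_pos_iff.2 (root_ne_zero hα₀)) 2
  intro n
  induction n with
  | zero =>
      intro v hvp hvn hbound
      by_cases hvθ : v = θ
      · subst hvθ
        exact ⟨[], by simp, by simp, by simp⟩
      · exfalso
        have hcl := hθhigh v (R.pos_sub hvp)
        have hpos0 := rho_inner_pos hρ hcl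
        have hD : 0 < ⟪ρ, θ - v⟫ := by
          rcases lt_or_eq_of_le hpos0.1 with h | h
          · exact h
          · exfalso
            have := hpos0.2 h.symm
            rw [sub_eq_zero] at this
            exact hvθ this.symm
        rw [inner_sub_right] at hD
        simp only [Nat.cast_zero, zero_mul] at hbound
        linarith
  | succ n ih =>
      intro v hvp hvn hbound
      by_cases hvθ : v = θ
      · subst hvθ
        exact ⟨[], by simp, by simp, by simp⟩
      · have hcl := hθhigh v (R.pos_sub hvp)
        have hpos0 := rho_inner_pos hρ hcl
        have hD : 0 < ⟪ρ, θ - v⟫ := by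
          rcases lt_or_eq_of_le hpos0.1 with h | h
          · exact h
          · exfalso
            have := hpos0.2 h.symm
            rw [sub_eq_zero] at this
            exact hvθ this.symm
        -- find a simple root pairing negatively with v
        have hθv : ⟪θ, v⟫ < ‖α₀‖ ^ 2 := by
          have hne : θ - v ≠ 0 := fun h => hvθ (by rw [sub_eq_zero] at h; exact h.symm)
          have h0 : 0 < ‖θ - v‖ ^ 2 := pow_pos (norm_pos_iff.2 hne) 2
          rw [norm_sub_sq_real, hθn, hvn] at h0
          linarith
        have hneg : ⟪θ - v, v⟫ < 0 := by
          rw [inner_sub_left, real_inner_self_eq_norm_sq, hvn]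
          linarith
        obtain ⟨b, hb, hbv⟩ := exists_neg_inner hcl hneg
        obtain ⟨hv'p, hval⟩ := step_up hR hcrys hα₀ hlong hb hvp hvn hbv
        set v' := srefl b v with hv'
        have hv'n : ‖v'‖ = ‖α₀‖ := by
          rw [hv', LinearIsometryEquiv.norm_map, hvn]
        have hrv' : ⟪ρ, v'⟫ = ⟪ρ, v⟫ + ‖α₀‖ ^ 2 / 2 := by
          rw [hv', inner_rho_srefl hρ hb, hval]; ring
        have hbound' : ⟪ρ, θ⟫ - ⟪ρ, v'⟫ ≤ n * (‖α₀‖ ^ 2 / 2) := by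
          rw [hrv']
          push_cast at hbound ⊢
          linarith
        obtain ⟨l', hl's, hl'prod, hl'len⟩ := ih v' hv'p hv'n hbound'
        refine ⟨l' ++ [b], ?_, ?_, ?_⟩
        · intro x hx
          rcases List.mem_append.1 hx with h | h
          · exact hl's x h
          · rw [List.mem_singleton] at h
            exact h ▸ hb
        · rw [prod_append_apply]
          have : (([b].map srefl).prod) v = v' := by
            simp [hv']
          rw [this, hl'prod]
        · rw [List.length_append, List.length_singleton]
          push_cast
          rw [hrv'] at hl'len
          push_cast at hl'len
          linarith

lemma prod_reverse_inv (l : List V) :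
    (((l.map srefl).prod)⁻¹ : V ≃ₗᵢ[ℝ] V) = ((l.reverse).map srefl).prod := by
  rw [List.prod_inv_reverse, List.map_reverse, List.map_map]
  have h : ((fun x => x⁻¹) ∘ srefl : V → V ≃ₗᵢ[ℝ] V) = srefl :=
    funext fun a => Submodule.reflection_inv
  rw [h]

lemma exists_word {w : V ≃ₗᵢ[ℝ] V} (hw : w ∈ R.W) : ∃ l : List V, R.IsWord l w := by
  induction hw using Subgroup.closure_induction with
  | mem x hx =>
      obtain ⟨a, ha, rfl⟩ := hx
      exact ⟨[a], fun b hb => (List.mem_singleton.1 hb) ▸ ha, by simp⟩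
  | one => exact ⟨[], by simp, by simp [IsWord]⟩
  | mul x y hx hy ihx ihy =>
      obtain ⟨lx, hlx, hx'⟩ := ihx
      obtain ⟨ly, hly, hy'⟩ := ihy
      refine ⟨lx ++ ly, ?_, ?_⟩
      · intro a ha
        rcases List.mem_append.1 ha with h | h
        · exact hlx a h
        · exact hly a h
      · rw [List.map_append, List.prod_append, ← hx', ← hy']
  | inv x hx ihx =>
      obtain ⟨lx, hlx, hx'⟩ := ihx
      refine ⟨lx.reverse, fun a ha => hlx a (List.mem_reverse.1 ha), ?_⟩
      rw [hx', prod_reverse_inv]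

end RootSystemData
open RootSystemData
open scoped RealInnerProductSpace

variable {V : Type*} [NormedAddCommGroup V] [InnerProductSpace ℝ V] [FiniteDimensional ℝ V]

/-- for a long simple root `α`, the minimal-length element `y` with
`y(α) = θ` satisfies `ℓ(y) = g_R − 2`, where `g_R = 1 + Σ c_{α∨}(θ∨)`. -/
theorem length_of_minimal_to_highest_root (R : RootSystemData V) (hR : R.IsGeometric)
    (hfin : R.roots.Finite)
    (hcrys : ∀ α ∈ R.roots, ∀ β ∈ R.roots, ∃ n : ℤ, 2 * ⟪α, β⟫ / ⟪α, α⟫ = (n : ℝ))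
    (hirr : ∀ S₁ S₂ : Set V, R.simples = S₁ ∪ S₂ →
      (∀ a ∈ S₁, ∀ b ∈ S₂, ⟪a, b⟫ = 0) → S₁ = ∅ ∨ S₂ = ∅)
    (θ : V) (hθpos : θ ∈ R.pos)
    (hθhigh : ∀ α ∈ R.roots, θ - α ∈ AddSubmonoid.closure R.simples)
    (α : V) (hα : α ∈ R.simples) (hlong : ∀ β ∈ R.roots, ‖β‖ ≤ ‖α‖)
    (y : V ≃ₗᵢ[ℝ] V) (hy : y ∈ R.W ∧ y α = θ ∧
      ∀ z : V ≃ₗᵢ[ℝ] V, z ∈ R.W → z α = θ → R.length y ≤ R.length z)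
    (hPi : R.simples.Finite) (c : V → ℝ)
    (hc : (2 / ‖θ‖ ^ 2) • θ =
      ∑ β ∈ hPi.toFinset, c β • ((2 / ‖β‖ ^ 2) • β)) :
    (R.length y : ℝ) = (1 + ∑ β ∈ hPi.toFinset, c β) - 2 := by
  obtain ⟨hyW, hyα, hymin⟩ := hy
  obtain ⟨ρ, hρ⟩ := exists_rho hR hfin
  set A : ℝ := ‖α‖ ^ 2 with hA
  have hαroot : α ∈ R.roots := simple_mem_roots hα
  have hApos : 0 < A := pow_pos (norm_pos_iff.2 (root_ne_zero hαroot)) 2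
  have hθn : ‖θ‖ = ‖α‖ := by rw [← hyα, LinearIsometryEquiv.norm_map]
  have hρα : ⟪ρ, α⟫ = A / 2 := by have := hρ α hα; rw [hA]; linarith
  have hHge : A / 2 ≤ ⟪ρ, θ⟫ := by
    have h0 := (rho_inner_pos hρ (hθhigh α hαroot)).1
    rw [inner_sub_right] at h0
    linarith
  -- the coefficient sum computes the pairing with ρ
  have hsum : ∑ β ∈ hPi.toFinset, c β = 2 * ⟪ρ, θ⟫ / A := by
    have h1 := congrArg (fun x : V => (⟪ρ, x⟫ : ℝ)) hc
    simp only [inner_sum, real_inner_smul_right] at h1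
    have h2 : ∀ β ∈ hPi.toFinset, c β * (2 / ‖β‖ ^ 2 * ⟪ρ, β⟫) = c β := by
      intro β hβ
      have hβs : β ∈ R.simples := hPi.mem_toFinset.1 hβ
      have hβ2 : ‖β‖ ^ 2 ≠ 0 :=
        pow_ne_zero _ (norm_ne_zero_iff.2 (simple_ne_zero hβs))
      have := hρ β hβs
      have hfac : 2 / ‖β‖ ^ 2 * ⟪ρ, β⟫ = 1 := by
        rw [div_mul_eq_mul_div, div_eq_one_iff_eq hβ2]
        linarith
      rw [hfac, mul_one]
    rw [Finset.sum_congr rfl h2] at h1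
    rw [← h1, hθn, ← hA]
    field_simp
  -- a word realizing the length of y
  have hne : R.length y ∈ {n | ∃ l : List V, R.IsWord l y ∧ l.length = n} := by
    obtain ⟨l₀, hl₀⟩ := exists_word hyW
    exact Nat.sInf_mem ⟨l₀.length, l₀, hl₀, rfl⟩
  obtain ⟨l, hlword, hllen⟩ := hne
  -- lower bound
  have hlow : ⟪ρ, θ⟫ ≤ A / 2 + (R.length y : ℝ) * (A / 2) := by
    have hb := word_bound hR hcrys hαroot hlong hρ l hlword.1 hαroot rfl
    rw [← hlword.2, hyα] at hb
    rw [← hA] at hb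
    rw [abs_of_pos (lt_of_lt_of_le (by linarith) hHge)] at hb
    rw [hρα, abs_of_pos (by linarith)] at hb
    rw [hllen] at hb
    linarith
  -- upper bound via the chain
  have hchainbound : ⟪ρ, θ⟫ - ⟪ρ, α⟫ ≤ (R.length y : ℝ) * (A / 2) := by
    rw [hρα]; linarith
  obtain ⟨lc, hlcs, hlcprod, hlclen⟩ :=
    chain hR hcrys hαroot hlong hρ hθpos hθn hθhigh (R.length y) α
      (R.simples_sub hα) rfl hchainbound
  rw [← hA] at hlclen
  have hzW : (lc.map srefl).prod ∈ R.W := by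
    apply Subgroup.list_prod_mem
    intro x hx
    obtain ⟨a, ha, rfl⟩ := List.mem_map.1 hx
    exact Subgroup.subset_closure ⟨a, hlcs a ha, rfl⟩
  have hzlen : R.length ((lc.map srefl).prod) ≤ lc.length :=
    Nat.sInf_le ⟨lc, ⟨hlcs, rfl⟩, rfl⟩
  have hyz : R.length y ≤ lc.length :=
    le_trans (hymin _ hzW hlcprod) hzlen
  have hup : (R.length y : ℝ) * (A / 2) ≤ ⟪ρ, θ⟫ - A / 2 := by
    have hcast : (R.length y : ℝ) ≤ (lc.length : ℝ) := by exact_mod_cast hyz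
    have := mul_le_mul_of_nonneg_right hcast (by linarith : (0:ℝ) ≤ A / 2)
    rw [hlclen, hρα] at this
    linarith
  have hEq : (R.length y : ℝ) * (A / 2) = ⟪ρ, θ⟫ - A / 2 :=
    le_antisymm hup (by linarith)
  rw [hsum]
  have hAne : A ≠ 0 := hApos.ne'
  field_simp
  linear_combination 2 * hEq
end

section
/- Let R be a finite irreducible root system with highest root θ, α a long simple root, and y_α the minimal-length element with y_α(α) = θ. Then N(y_α⁻¹) = {β ∈ R⁺ : (β, α∨) = −1}. -/
open scoped RealInnerProductSpace

open RootSystemData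
open scoped RealInnerProductSpace

variable {V : Type*} [NormedAddCommGroup V] [InnerProductSpace ℝ V] [FiniteDimensional ℝ V]

set_option linter.unusedSectionVars false
set_option maxHeartbeats 1000000

section Helpers

variable {V : Type*} [NormedAddCommGroup V] [InnerProductSpace ℝ V] [FiniteDimensional ℝ V]

theorem aux_srefl_apply (γ x : V) : srefl γ x = x - (2 * ⟪γ, x⟫ / ‖γ‖ ^ 2) • γ := by
  rw [srefl, Submodule.reflection_orthogonal_apply, Submodule.reflection_singleton_apply]
  simp only [RCLike.ofReal_real_eq_id, id_eq, two_smul]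
  module

theorem aux_srefl_self (γ : V) : srefl γ γ = -γ :=
  Submodule.reflection_orthogonalComplement_singleton_eq_neg γ

theorem aux_srefl_fix {γ x : V} (h : ⟪γ, x⟫ = 0) : srefl γ x = x := by
  rw [aux_srefl_apply, h]
  simp

theorem aux_srefl_inv (γ : V) : (srefl γ)⁻¹ = srefl γ := Submodule.reflection_inv

theorem aux_srefl_sq (γ : V) : srefl γ * srefl γ = 1 := Submodule.reflection_mul_reflection _

theorem aux_srefl_srefl (γ x : V) : srefl γ (srefl γ x) = x := Submodule.reflection_reflection _ x

theorem aux_srefl_conj (w : V ≃ₗᵢ[ℝ] V) (γ : V) : srefl (w γ) = w * srefl γ * w⁻¹ := by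
  ext x
  have h1 : (w * srefl γ * w⁻¹) x = w (srefl γ (w.symm x)) := by
    simp [LinearIsometryEquiv.inv_def]
  have h2 : ⟪γ, w.symm x⟫ = ⟪w γ, x⟫ := by
    conv_rhs => rw [show x = w (w.symm x) from (w.apply_symm_apply x).symm]
    exact (w.inner_map_map γ (w.symm x)).symm
  rw [h1, aux_srefl_apply, aux_srefl_apply, map_sub, map_smul, w.norm_map, h2,
    w.apply_symm_apply]

theorem aux_prod_reverse_inv (l : List V) :
    ((l.map srefl).prod)⁻¹ = ((l.reverse).map srefl).prod := by
  induction l with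
  | nil => simp
  | cons γ t ih =>
    simp only [List.map_cons, List.prod_cons, List.reverse_cons, List.map_append,
      List.prod_append, mul_inv_rev, ih, aux_srefl_inv, List.map_nil, List.prod_nil, mul_one]

variable (R : RootSystemData V)

theorem aux_neg_mem_roots {r : V} (hr : r ∈ R.roots) : -r ∈ R.roots := by
  rw [R.eq_union] at hr ⊢
  rcases hr with h | ⟨p, hp, rfl⟩
  · exact Or.inr ⟨r, h, rfl⟩
  · exact Or.inl (by simpa using hp)

theorem aux_mem_pos_or_neg {r : V} (hr : r ∈ R.roots) : r ∈ R.pos ∨ -r ∈ R.pos := by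
  rw [R.eq_union] at hr
  rcases hr with h | ⟨p, hp, rfl⟩
  · exact Or.inl h
  · exact Or.inr (by simpa using hp)

theorem aux_not_pos_and_negimg {β : V} (h1 : β ∈ R.pos) (h2 : β ∈ Neg.neg '' R.pos) :
    False := by
  obtain ⟨p, hp, rfl⟩ := h2
  exact R.not_both (-p) h1 (by simpa using hp)

theorem aux_W_roots (hR : R.IsGeometric) {w : V ≃ₗᵢ[ℝ] V} (hw : w ∈ R.W) :
    (∀ r ∈ R.roots, w r ∈ R.roots) ∧ (∀ r ∈ R.roots, w⁻¹ r ∈ R.roots) := by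
  induction hw using Subgroup.closure_induction with
  | mem g hg =>
    obtain ⟨γ, hγ, rfl⟩ := hg
    have hγr : γ ∈ R.roots := R.pos_sub (R.simples_sub hγ)
    refine ⟨fun r hr => hR.refl_stable γ hγr r hr, ?_⟩
    rw [aux_srefl_inv]
    exact fun r hr => hR.refl_stable γ hγr r hr
  | one => constructor <;> intro r hr <;> simpa
  | mul a b ha hb iha ihb =>
    refine ⟨fun r hr => ?_, fun r hr => ?_⟩
    · have h : (a * b) r = a (b r) := rfl
      rw [h]; exact iha.1 _ (ihb.1 r hr)
    · have h : (a * b)⁻¹ r = b⁻¹ (a⁻¹ r) := by rw [mul_inv_rev]; rfl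
      rw [h]; exact ihb.2 _ (iha.2 r hr)
  | inv a ha iha => exact ⟨by simpa using iha.2, by simpa using iha.1⟩

theorem aux_crys_int
    (hcrys : ∀ a ∈ R.roots, ∀ b ∈ R.roots, ∃ n : ℤ, 2 * ⟪a, b⟫ / ⟪a, a⟫ = (n : ℝ))
    {r r' : V} (hr : r ∈ R.roots) (hr' : r' ∈ R.roots) :
    ∃ n : ℤ, 2 * ⟪r, r'⟫ = n * ‖r‖ ^ 2 := by
  obtain ⟨n, hn⟩ := hcrys r hr r' hr'
  have hpos : (0 : ℝ) < ⟪r, r⟫ := by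
    rw [real_inner_self_eq_norm_sq]
    exact pow_pos (norm_pos_iff.2 (R.ne_zero r hr)) 2
  rw [div_eq_iff (ne_of_gt hpos)] at hn
  exact ⟨n, by rw [hn, real_inner_self_eq_norm_sq]⟩

theorem aux_sub_root (hR : R.IsGeometric)
    (hcrys : ∀ a ∈ R.roots, ∀ b ∈ R.roots, ∃ n : ℤ, 2 * ⟪a, b⟫ / ⟪a, a⟫ = (n : ℝ))
    {r r' : V} (hr : r ∈ R.roots) (hr' : r' ∈ R.roots)
    (hinner : 0 < ⟪r, r'⟫) (hne : r ≠ r') : r - r' ∈ R.roots := by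
  obtain ⟨m, hm⟩ := aux_crys_int R hcrys hr' hr
  obtain ⟨m', hm'⟩ := aux_crys_int R hcrys hr hr'
  have hr0 : (0 : ℝ) < ‖r‖ ^ 2 := pow_pos (norm_pos_iff.2 (R.ne_zero r hr)) 2
  have hr'0 : (0 : ℝ) < ‖r'‖ ^ 2 := pow_pos (norm_pos_iff.2 (R.ne_zero r' hr')) 2
  have hcm : ⟪r', r⟫ = ⟪r, r'⟫ := real_inner_comm r r'
  have hm1 : 1 ≤ m := by
    have h1 : (0 : ℝ) < (m : ℝ) * ‖r'‖ ^ 2 := by rw [← hm, hcm]; linarith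
    have h2 : (0 : ℝ) < (m : ℝ) := by nlinarith [hr'0]
    have h3 : (0 : ℤ) < m := by exact_mod_cast h2
    omega
  have hm'1 : 1 ≤ m' := by
    have h1 : (0 : ℝ) < (m' : ℝ) * ‖r‖ ^ 2 := by rw [← hm']; linarith
    have h2 : (0 : ℝ) < (m' : ℝ) := by nlinarith [hr0]
    have h3 : (0 : ℤ) < m' := by exact_mod_cast h2
    omega
  by_cases he : m = 1
  · have hs : srefl r' r = r - r' := by
      rw [aux_srefl_apply]
      have : 2 * ⟪r', r⟫ / ‖r'‖ ^ 2 = 1 := by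
        rw [hm, he]
        push_cast; rw [one_mul]; exact div_self (ne_of_gt hr'0)
      rw [this, one_smul]
    rw [← hs]
    exact hR.refl_stable r' hr' r hr
  by_cases he' : m' = 1
  · have hs : srefl r r' = r' - r := by
      rw [aux_srefl_apply]
      have : 2 * ⟪r, r'⟫ / ‖r‖ ^ 2 = 1 := by
        rw [hm', he']
        push_cast; rw [one_mul]; exact div_self (ne_of_gt hr0)
      rw [this, one_smul]
    have h1 : r' - r ∈ R.roots := by
      rw [← hs]; exact hR.refl_stable r hr r' hr'
    have := aux_neg_mem_roots R h1
    simpa using this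
  exfalso
  have h2m : (2 : ℝ) ≤ (m : ℝ) := by exact_mod_cast (by omega : (2 : ℤ) ≤ m)
  have h2m' : (2 : ℝ) ≤ (m' : ℝ) := by exact_mod_cast (by omega : (2 : ℤ) ≤ m')
  have e1 : ‖r'‖ ^ 2 ≤ ⟪r, r'⟫ := by nlinarith [hm, hcm]
  have e2 : ‖r‖ ^ 2 ≤ ⟪r, r'⟫ := by nlinarith [hm']
  have e3 : ‖r - r'‖ ^ 2 ≤ 0 := by
    rw [norm_sub_sq_real]
    linarith
  have e4 : r - r' = 0 := by
    have : ‖r - r'‖ ^ 2 = 0 := le_antisymm e3 (by positivity)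
    have h5 : ‖r - r'‖ = 0 := by
      nlinarith [norm_nonneg (r - r')]
    exact norm_eq_zero.mp h5
  exact hne (sub_eq_zero.mp e4)

end Helpers

section Helpers2

variable {V : Type*} [NormedAddCommGroup V] [InnerProductSpace ℝ V] [FiniteDimensional ℝ V]
variable (R : RootSystemData V)

theorem aux_exists_posfun (hR : R.IsGeometric) (hfin : R.roots.Finite) :
    ∃ v : V, ∀ s ∈ R.simples, 0 < ⟪v, s⟫ := by
  classical
  have hpf : R.pos.Finite := hfin.subset R.pos_sub
  refine ⟨∑ β ∈ hpf.toFinset, β, fun s hs => ?_⟩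
  have hsp : s ∈ R.pos := R.simples_sub hs
  have hs0 : s ≠ 0 := R.ne_zero s (R.pos_sub hsp)
  have hsF : s ∈ hpf.toFinset := hpf.mem_toFinset.2 hsp
  rw [sum_inner, ← Finset.add_sum_erase _ _ hsF]
  have hinv : ∀ β : V, ⟪srefl s β, s⟫ = -⟪β, s⟫ := by
    intro β
    have h1 := (srefl s).inner_map_map β s
    rw [aux_srefl_self, inner_neg_right] at h1
    linarith
  have hzero : ∑ β ∈ hpf.toFinset.erase s, ⟪β, s⟫ = 0 := by
    refine Finset.sum_involution (fun β _ => srefl s β) ?_ ?_ ?_ ?_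
    · intro β hβ
      rw [hinv β]; ring
    · intro β hβ hfne h
      apply hfne
      have h' : srefl s β = β := h
      have h2 := hinv β
      rw [h'] at h2
      linarith
    · intro β hβ
      rw [Finset.mem_erase] at hβ ⊢
      have hβp : β ∈ R.pos := hpf.mem_toFinset.1 hβ.2
      have hp : srefl s β ∈ R.pos := hR.simple_perm s hs β hβp hβ.1
      refine ⟨fun h => ?_, hpf.mem_toFinset.2 hp⟩
      have h' : srefl s β = s := h
      have hβeq : β = srefl s s := by
        rw [← aux_srefl_srefl s β, h']
      rw [aux_srefl_self] at hβeq
      exact R.not_both s hsp (hβeq ▸ hβp)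
    · intro β hβ
      exact aux_srefl_srefl s β
  rw [hzero, add_zero, real_inner_self_eq_norm_sq]
  exact pow_pos (norm_pos_iff.2 hs0) 2

theorem aux_closure_nonneg {u : V} (hu : ∀ s ∈ R.simples, 0 ≤ ⟪u, s⟫) :
    ∀ x ∈ AddSubmonoid.closure R.simples, 0 ≤ ⟪u, x⟫ := by
  intro x hx
  induction hx using AddSubmonoid.closure_induction with
  | mem s hs => exact hu s hs
  | zero => simp
  | add a b ha hb iha ihb =>
    rw [inner_add_right]
    linarith

theorem aux_neg_simple_not_closure (hR : R.IsGeometric) (hfin : R.roots.Finite)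
    {s : V} (hs : s ∈ R.simples) : -s ∉ AddSubmonoid.closure R.simples := by
  obtain ⟨v, hv⟩ := aux_exists_posfun R hR hfin
  intro h
  have h1 := aux_closure_nonneg R (fun t ht => le_of_lt (hv t ht)) _ h
  rw [inner_neg_right] at h1
  exact absurd (hv s hs) (by linarith)

theorem aux_theta_dominant (hR : R.IsGeometric) (hfin : R.roots.Finite)
    (hcrys : ∀ a ∈ R.roots, ∀ b ∈ R.roots, ∃ n : ℤ, 2 * ⟪a, b⟫ / ⟪a, a⟫ = (n : ℝ))
    {θ : V} (hθpos : θ ∈ R.pos)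
    (hθhigh : ∀ a ∈ R.roots, θ - a ∈ AddSubmonoid.closure R.simples) :
    ∀ s ∈ R.simples, 0 ≤ ⟪θ, s⟫ := by
  intro s hs
  by_contra hneg
  push_neg at hneg
  have hsr : s ∈ R.roots := R.pos_sub (R.simples_sub hs)
  have hnsr : -s ∈ R.roots := aux_neg_mem_roots R hsr
  have hθr : θ ∈ R.roots := R.pos_sub hθpos
  have hne : θ ≠ -s := fun h => R.not_both s (R.simples_sub hs) (h ▸ hθpos)
  have h1 : θ - (-s) ∈ R.roots :=
    aux_sub_root R hR hcrys hθr hnsr (by rw [inner_neg_right]; linarith) hne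
  have h2 : θ + s ∈ R.roots := by simpa [sub_neg_eq_add] using h1
  have h3 := hθhigh _ h2
  have h4 : θ - (θ + s) = -s := by abel
  rw [h4] at h3
  exact aux_neg_simple_not_closure R hR hfin hs h3

theorem aux_theta_pos_inner (hR : R.IsGeometric) (hfin : R.roots.Finite)
    (hcrys : ∀ a ∈ R.roots, ∀ b ∈ R.roots, ∃ n : ℤ, 2 * ⟪a, b⟫ / ⟪a, a⟫ = (n : ℝ))
    {θ : V} (hθpos : θ ∈ R.pos)
    (hθhigh : ∀ a ∈ R.roots, θ - a ∈ AddSubmonoid.closure R.simples) :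
    ∀ β ∈ R.pos, 0 ≤ ⟪θ, β⟫ := fun β hβ =>
  aux_closure_nonneg R (aux_theta_dominant R hR hfin hcrys hθpos hθhigh) β (hR.pos_comb β hβ)

theorem aux_word_mem_W {l : List V} (hl : ∀ γ ∈ l, γ ∈ R.simples) :
    (l.map srefl).prod ∈ R.W := by
  induction l with
  | nil => simpa using one_mem R.W
  | cons γ t ih =>
    rw [List.map_cons, List.prod_cons]
    exact mul_mem (Subgroup.subset_closure ⟨γ, hl γ List.mem_cons_self, rfl⟩)
      (ih fun x hx => hl x (List.mem_cons_of_mem _ hx))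

theorem aux_exists_word {w : V ≃ₗᵢ[ℝ] V} (hw : w ∈ R.W) : ∃ l : List V, R.IsWord l w := by
  induction hw using Subgroup.closure_induction with
  | mem g hg =>
    obtain ⟨γ, hγ, rfl⟩ := hg
    exact ⟨[γ], by simpa using hγ, by simp⟩
  | one => exact ⟨[], by simp, by simp⟩
  | mul a b ha hb iha ihb =>
    obtain ⟨l1, h1s, h1p⟩ := iha
    obtain ⟨l2, h2s, h2p⟩ := ihb
    exact ⟨l1 ++ l2, fun x hx => (List.mem_append.1 hx).elim (h1s x) (h2s x),
      by rw [List.map_append, List.prod_append, ← h1p, ← h2p]⟩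
  | inv a ha iha =>
    obtain ⟨l, hs, hp⟩ := iha
    exact ⟨l.reverse, fun x hx => hs x (List.mem_reverse.1 hx),
      by rw [hp, aux_prod_reverse_inv]⟩

theorem aux_length_le_of_word {l : List V} {w : V ≃ₗᵢ[ℝ] V} (hl : R.IsWord l w) :
    R.length w ≤ l.length :=
  Nat.sInf_le ⟨l, hl, rfl⟩

theorem aux_exists_reduced_word {w : V ≃ₗᵢ[ℝ] V} (hw : w ∈ R.W) :
    ∃ l : List V, R.IsWord l w ∧ l.length = R.length w := by
  obtain ⟨l, hl⟩ := aux_exists_word R hw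
  have hne : {n | ∃ l : List V, R.IsWord l w ∧ l.length = n}.Nonempty := ⟨l.length, l, hl, rfl⟩
  exact Nat.sInf_mem hne

theorem aux_exchange (hR : R.IsGeometric) {β : V} (hβ : β ∈ R.pos)
    (l : List V) (hl : ∀ γ ∈ l, γ ∈ R.simples)
    (hneg : (l.map srefl).prod β ∈ Neg.neg '' R.pos) :
    ∃ l' : List V, (∀ γ ∈ l', γ ∈ R.simples) ∧
      (l'.map srefl).prod = (l.map srefl).prod * srefl β ∧ l'.length + 1 = l.length := by
  induction l with
  | nil =>
    exfalso
    apply aux_not_pos_and_negimg R hβ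
    simpa using hneg
  | cons γ t ih =>
    have hγ : γ ∈ R.simples := hl γ List.mem_cons_self
    have hlt : ∀ x ∈ t, x ∈ R.simples := fun x hx => hl x (List.mem_cons_of_mem _ hx)
    by_cases hc : (t.map srefl).prod β ∈ Neg.neg '' R.pos
    · obtain ⟨t', ht's, ht'p, ht'l⟩ := ih hlt hc
      refine ⟨γ :: t', ?_, ?_, ?_⟩
      · intro x hx
        rcases List.mem_cons.1 hx with rfl | hx
        · exact hγ
        · exact ht's x hx
      · rw [List.map_cons, List.prod_cons, ht'p, List.map_cons, List.prod_cons, mul_assoc]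
      · simpa using ht'l
    · -- T β is a positive root, and srefl γ (T β) is a negative root, so T β = γ
      set T := (t.map srefl).prod with hT
      have hTW : T ∈ R.W := aux_word_mem_W R hlt
      have hTβroot : T β ∈ R.roots := (aux_W_roots R hR hTW).1 β (R.pos_sub hβ)
      have hTβpos : T β ∈ R.pos := by
        rcases aux_mem_pos_or_neg R hTβroot with h | h
        · exact h
        · exact absurd ⟨-(T β), h, neg_neg _⟩ hc
      have hneg2 : srefl γ (T β) ∈ Neg.neg '' R.pos := by
        have : ((γ :: t).map srefl).prod β = srefl γ (T β) := by
          rw [List.map_cons, List.prod_cons]; rfl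
        rwa [this] at hneg
      have heq : T β = γ := by
        by_contra hne
        exact aux_not_pos_and_negimg R (hR.simple_perm γ hγ _ hTβpos hne) hneg2
      have hconj : srefl γ = T * srefl β * T⁻¹ := by
        rw [← heq]; exact aux_srefl_conj T β
      refine ⟨t, hlt, ?_, by simp⟩
      rw [List.map_cons, List.prod_cons, ← hT]
      calc T = T * (srefl β * srefl β) := by rw [aux_srefl_sq, mul_one]
        _ = T * srefl β * T⁻¹ * T * srefl β := by group
        _ = srefl γ * T * srefl β := by rw [← hconj]

end Helpers2

/-- `N(y_α⁻¹) = {β ∈ R⁺ : (β, α∨) = −1}`. -/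
theorem inversions_of_inverse_minimal (R : RootSystemData V) (hR : R.IsGeometric)
    (hfin : R.roots.Finite)
    (hcrys : ∀ α ∈ R.roots, ∀ β ∈ R.roots, ∃ n : ℤ, 2 * ⟪α, β⟫ / ⟪α, α⟫ = (n : ℝ))
    (hirr : ∀ S₁ S₂ : Set V, R.simples = S₁ ∪ S₂ →
      (∀ a ∈ S₁, ∀ b ∈ S₂, ⟪a, b⟫ = 0) → S₁ = ∅ ∨ S₂ = ∅)
    (θ : V) (hθpos : θ ∈ R.pos)
    (hθhigh : ∀ α ∈ R.roots, θ - α ∈ AddSubmonoid.closure R.simples)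
    (α : V) (hα : α ∈ R.simples) (hlong : ∀ β ∈ R.roots, ‖β‖ ≤ ‖α‖)
    (y : V ≃ₗᵢ[ℝ] V) (hy : y ∈ R.W ∧ y α = θ ∧
      ∀ z : V ≃ₗᵢ[ℝ] V, z ∈ R.W → z α = θ → R.length y ≤ R.length z) :
    R.N y⁻¹ = {β | β ∈ R.pos ∧ ⟪β, (2 / ‖α‖ ^ 2) • α⟫ = -1} := by
  obtain ⟨hyW, hyα, hymin⟩ := hy
  have hαpos : α ∈ R.pos := R.simples_sub hα
  have hαroot : α ∈ R.roots := R.pos_sub hαpos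
  have hα0 : α ≠ 0 := R.ne_zero α hαroot
  have hα2 : (0 : ℝ) < ‖α‖ ^ 2 := pow_pos (norm_pos_iff.2 hα0) 2
  have hθr : θ ∈ R.roots := R.pos_sub hθpos
  have hnormθ : ‖θ‖ = ‖α‖ := by rw [← hyα]; exact y.norm_map α
  have hinner_map : ∀ β : V, ⟪θ, y β⟫ = ⟪α, β⟫ := fun β => by
    rw [← hyα]; exact y.inner_map_map α β
  have hdom := aux_theta_pos_inner R hR hfin hcrys hθpos hθhigh
  ext β
  simp only [RootSystemData.N, Set.mem_setOf_eq, inv_inv]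
  constructor
  · rintro ⟨hβpos, himg⟩
    refine ⟨hβpos, ?_⟩
    have hβroot : β ∈ R.roots := R.pos_sub hβpos
    have hyβroot : y β ∈ R.roots := (aux_W_roots R hR hyW).1 β hβroot
    obtain ⟨p, hp, hpe⟩ := himg
    have hle : ⟪α, β⟫ ≤ 0 := by
      have hd := hdom p hp
      have h1 : ⟪α, β⟫ = -⟪θ, p⟫ := by
        rw [← hinner_map β, ← hpe, inner_neg_right]
      linarith
    obtain ⟨n, hn⟩ := aux_crys_int R hcrys hθr hyβroot
    rw [hinner_map β, hnormθ] at hn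
    have hn0 : n ≤ 0 := by
      by_contra h
      push_neg at h
      have h1 : (1 : ℝ) ≤ (n : ℝ) := by exact_mod_cast h
      nlinarith
    have hcases : n = 0 ∨ n = -1 ∨ n ≤ -2 := by omega
    rcases hcases with rfl | rfl | hn2
    · exfalso
      have hαβ : ⟪α, β⟫ = 0 := by push_cast at hn; linarith
      obtain ⟨l, hlw, hll⟩ := aux_exists_reduced_word R hyW
      have hneg' : (l.map srefl).prod β ∈ Neg.neg '' R.pos := by
        rw [← hlw.2]
        exact ⟨p, hp, hpe⟩
      obtain ⟨l', hl's, hl'p, hl'l⟩ := aux_exchange R hR hβpos l hlw.1 hneg'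
      have hzW : (l'.map srefl).prod ∈ R.W := aux_word_mem_W R hl's
      have hzα : ((l'.map srefl).prod) α = θ := by
        rw [hl'p, ← hlw.2]
        have h1 : (y * srefl β) α = y (srefl β α) := rfl
        rw [h1, aux_srefl_fix (by rw [real_inner_comm]; exact hαβ), hyα]
      have hmin := hymin _ hzW hzα
      have hlen : R.length ((l'.map srefl).prod) ≤ l'.length :=
        aux_length_le_of_word R ⟨hl's, rfl⟩
      omega
    · rw [real_inner_smul_right, real_inner_comm]
      push_cast at hn
      field_simp
      linarith
    · exfalso
      have hc : (n : ℝ) ≤ -2 := by exact_mod_cast hn2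
      have hβle : ‖β‖ ^ 2 ≤ ‖α‖ ^ 2 := by
        have := hlong β hβroot
        nlinarith [norm_nonneg β]
      have hsum : ‖y β + θ‖ ^ 2 ≤ 0 := by
        rw [norm_add_sq_real]
        have h1 : ⟪y β, θ⟫ = ⟪α, β⟫ := by rw [real_inner_comm]; exact hinner_map β
        have h2 : ‖y β‖ = ‖β‖ := y.norm_map β
        rw [h1, h2, hnormθ]
        nlinarith
      have h0 : y β + θ = 0 := by
        have h4 : ‖y β + θ‖ ^ 2 = 0 := le_antisymm hsum (by positivity)
        have h5 : ‖y β + θ‖ = 0 := by nlinarith [norm_nonneg (y β + θ)]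
        exact norm_eq_zero.mp h5
      have hβα : β = -α := by
        have h6 : y β = -θ := eq_neg_of_add_eq_zero_left h0
        have h7 : y β = y (-α) := by rw [h6, map_neg, hyα]
        exact y.injective h7
      rw [hβα] at hβpos
      exact absurd hβpos (R.not_both α hαpos)
  · rintro ⟨hβpos, hpair⟩
    refine ⟨hβpos, ?_⟩
    have hβroot : β ∈ R.roots := R.pos_sub hβpos
    have hyβroot : y β ∈ R.roots := (aux_W_roots R hR hyW).1 β hβroot
    have hαβ : ⟪α, β⟫ < 0 := by
      rw [real_inner_smul_right, real_inner_comm] at hpair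
      have hq : (0 : ℝ) < 2 / ‖α‖ ^ 2 := by positivity
      nlinarith
    rcases aux_mem_pos_or_neg R hyβroot with h | h
    · exfalso
      have hd := hdom _ h
      rw [hinner_map β] at hd
      linarith
    · exact ⟨-(y β), h, by simp⟩
end

section
/- Let R be a finite irreducible root system with highest root θ, α a long root, and y_α the minimal-length element with y_α(α) = θ. If γ ∈ R⁺ and (γ, θ) = 0, then γ ∉ N(y_α). -/
open scoped RealInnerProductSpace

namespace RootSystemData13Aux

variable {V : Type*} [NormedAddCommGroup V] [InnerProductSpace ℝ V] [FiniteDimensional ℝ V]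

open RootSystemData

lemma srefl_apply (a v : V) : srefl a v = v - (2 * ⟪a, v⟫ / ⟪a, a⟫) • a := by
  show Submodule.reflection (ℝ ∙ a)ᗮ v = _
  set p : V := (ℝ ∙ a).starProjection v with hp
  have hdecomp : v = (v - p) + p := by abel
  have h1 : v - p ∈ (ℝ ∙ a)ᗮ := Submodule.sub_starProjection_mem_orthogonal v
  have h2 : p ∈ ((ℝ ∙ a)ᗮ)ᗮ :=
    Submodule.le_orthogonal_orthogonal _ (Submodule.starProjection_apply_mem (ℝ ∙ a) v)
  have key : Submodule.reflection (ℝ ∙ a)ᗮ v = (v - p) + (-p) := by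
    conv_lhs => rw [hdecomp]
    rw [map_add, Submodule.reflection_mem_subspace_eq_self h1,
      Submodule.reflection_mem_subspace_orthogonalComplement_eq_neg h2]
  have hps : p = (⟪a, v⟫ / ((‖a‖ : ℝ) ^ 2)) • a := by
    rw [hp, Submodule.starProjection_singleton]; norm_num
  have h3 : (2 * ⟪a, v⟫ / ⟪a, a⟫) = ⟪a, v⟫ / ‖a‖ ^ 2 + ⟪a, v⟫ / ‖a‖ ^ 2 := by
    rw [real_inner_self_eq_norm_sq]; ring
  rw [key, hps, h3, add_smul]
  abel

lemma srefl_fix {a v : V} (h : ⟪a, v⟫ = 0) : srefl a v = v := by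
  rw [srefl_apply, h]; simp

lemma srefl_inv (a : V) : (srefl a)⁻¹ = srefl a := rfl

lemma srefl_mul_self (a : V) : srefl a * srefl a = 1 := mul_inv_cancel (srefl a)

lemma srefl_conj (w : V ≃ₗᵢ[ℝ] V) (a : V) : srefl (w a) = w * srefl a * w⁻¹ := by
  ext v
  have h1 : ⟪w a, v⟫ = ⟪a, w⁻¹ v⟫ := by
    conv_lhs => rw [show v = w (w⁻¹ v) from (w.apply_symm_apply v).symm]
    exact w.inner_map_map a (w⁻¹ v)
  have h2 : ⟪w a, w a⟫ = ⟪a, a⟫ := w.inner_map_map a a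
  show srefl (w a) v = w (srefl a (w⁻¹ v))
  rw [srefl_apply, srefl_apply, h1, h2, map_sub, map_smul]
  congr 1
  exact (w.apply_symm_apply v).symm

/-- The exchange lemma. -/
lemma exchange (R : RootSystemData V) (hR : R.IsGeometric) :
    ∀ l : List V, (∀ a ∈ l, a ∈ R.simples) → ∀ γ ∈ R.pos,
    ((l.map srefl).prod)⁻¹ γ ∈ Neg.neg '' R.pos →
    ∃ l' : List V, (∀ a ∈ l', a ∈ R.simples) ∧
      (l'.map srefl).prod = srefl γ * (l.map srefl).prod ∧ l'.length + 1 = l.length := by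
  intro l
  induction l with
  | nil =>
    intro _ γ hγ hneg
    simp only [List.map_nil, List.prod_nil, inv_one, LinearIsometryEquiv.coe_one, id_eq] at hneg
    obtain ⟨δ, hδ, hδe⟩ := hneg
    have hd : -γ = δ := by rw [← hδe]; simp
    exact absurd (hd ▸ hδ) (R.not_both γ hγ)
  | cons a l ih =>
    intro hsimp γ hγ hneg
    have ha : a ∈ R.simples := hsimp a List.mem_cons_self
    have hl : ∀ b ∈ l, b ∈ R.simples := fun b hb => hsimp b (List.mem_cons_of_mem a hb)
    rw [List.map_cons, List.prod_cons] at hneg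
    by_cases hc : γ = a
    · subst hc
      exact ⟨l, hl, by rw [List.map_cons, List.prod_cons, ← mul_assoc, srefl_mul_self,
        one_mul], by simp⟩
    · have hγ' : srefl a γ ∈ R.pos := hR.simple_perm a ha γ hγ hc
      have hneg' : ((l.map srefl).prod)⁻¹ (srefl a γ) ∈ Neg.neg '' R.pos := by
        have : (srefl a * (l.map srefl).prod)⁻¹ γ
            = ((l.map srefl).prod)⁻¹ (srefl a γ) := by
          rw [mul_inv_rev, srefl_inv]; rfl
        rwa [this] at hneg
      obtain ⟨l', hl's, hl'p, hl'len⟩ := ih hl (srefl a γ) hγ' hneg'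
      refine ⟨a :: l', fun b hb => ?_, ?_, by simpa using hl'len⟩
      · rcases List.mem_cons.mp hb with h | h
        · exact h ▸ ha
        · exact hl's b h
      · have hconj : srefl (srefl a γ) = srefl a * srefl γ * srefl a := by
          rw [srefl_conj (srefl a) γ, srefl_inv]
        rw [List.map_cons, List.prod_cons, hl'p, hconj,
          List.map_cons, List.prod_cons]
        simp only [← mul_assoc]
        rw [srefl_mul_self, one_mul]

lemma prod_inv_eq (l : List V) :
    ((l.map srefl).prod)⁻¹ = (l.reverse.map srefl).prod := by
  induction l with
  | nil => simp
  | cons a l ih =>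
    rw [List.map_cons, List.prod_cons, mul_inv_rev, ih, List.reverse_cons, List.map_append,
      List.prod_append, List.map_cons, List.prod_cons, List.map_nil, List.prod_nil, mul_one,
      srefl_inv]

lemma exists_word (R : RootSystemData V) {w : V ≃ₗᵢ[ℝ] V} (hw : w ∈ R.W) :
    ∃ l : List V, (∀ a ∈ l, a ∈ R.simples) ∧ (l.map srefl).prod = w := by
  induction hw using Subgroup.closure_induction with
  | mem g hg =>
    obtain ⟨a, ha, rfl⟩ := hg
    exact ⟨[a], by simpa using ha, by simp⟩
  | one => exact ⟨[], by simp, by simp⟩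
  | mul x y _ _ hx hy =>
    obtain ⟨l₁, h₁s, h₁p⟩ := hx
    obtain ⟨l₂, h₂s, h₂p⟩ := hy
    exact ⟨l₁ ++ l₂, fun a ha => (List.mem_append.mp ha).elim (h₁s a) (h₂s a),
      by rw [List.map_append, List.prod_append, h₁p, h₂p]⟩
  | inv x _ hx =>
    obtain ⟨l, hs, hp⟩ := hx
    exact ⟨l.reverse, fun a ha => hs a (List.mem_reverse.mp ha),
      by rw [← prod_inv_eq, hp]⟩

end RootSystemData13Aux

open RootSystemData
open scoped RealInnerProductSpace

variable {V : Type*} [NormedAddCommGroup V] [InnerProductSpace ℝ V] [FiniteDimensional ℝ V]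

/-- if `γ ∈ R⁺` and `(γ, θ) = 0` then `γ ∉ N(y_α)`. -/
theorem orthogonal_to_highest_not_inversion (R : RootSystemData V) (hR : R.IsGeometric)
    (hfin : R.roots.Finite)
    (hcrys : ∀ α ∈ R.roots, ∀ β ∈ R.roots, ∃ n : ℤ, 2 * ⟪α, β⟫ / ⟪α, α⟫ = (n : ℝ))
    (hirr : ∀ S₁ S₂ : Set V, R.simples = S₁ ∪ S₂ →
      (∀ a ∈ S₁, ∀ b ∈ S₂, ⟪a, b⟫ = 0) → S₁ = ∅ ∨ S₂ = ∅)
    (θ : V) (hθpos : θ ∈ R.pos)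
    (hθhigh : ∀ α ∈ R.roots, θ - α ∈ AddSubmonoid.closure R.simples)
    (α : V) (hα : α ∈ R.roots) (hlong : ∀ β ∈ R.roots, ‖β‖ ≤ ‖α‖)
    (y : V ≃ₗᵢ[ℝ] V) (hy : y ∈ R.W ∧ y α = θ ∧
      ∀ z : V ≃ₗᵢ[ℝ] V, z ∈ R.W → z α = θ → R.length y ≤ R.length z)
    (γ : V) (hγ : γ ∈ R.pos) (hperp : ⟪γ, θ⟫ = 0) : γ ∉ R.N y := by
  open RootSystemData13Aux in
  rintro ⟨hγpos, hneg⟩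
  obtain ⟨l₀, hl₀s, hl₀p⟩ := exists_word R hy.1
  have hSne : {n | ∃ l : List V, R.IsWord l y ∧ l.length = n}.Nonempty :=
    ⟨l₀.length, l₀, ⟨hl₀s, hl₀p.symm⟩, rfl⟩
  obtain ⟨l, ⟨hls, hlp⟩, hllen⟩ := Nat.sInf_mem hSne
  have hneg' : ((l.map srefl).prod)⁻¹ γ ∈ Neg.neg '' R.pos := by rwa [← hlp]
  obtain ⟨l', hl's, hl'p, hl'len⟩ := exchange R hR l hls γ hγ hneg'
  set z : V ≃ₗᵢ[ℝ] V := srefl γ * y with hz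
  have hzprod : (l'.map srefl).prod = z := by rw [hl'p, ← hlp]
  have hzW : z ∈ R.W := by
    rw [← hzprod]
    refine Subgroup.list_prod_mem _ fun g hg => ?_
    obtain ⟨a, ha, rfl⟩ := List.mem_map.mp hg
    exact Subgroup.subset_closure ⟨a, hl's a ha, rfl⟩
  have hzα : z α = θ := by
    show srefl γ (y α) = θ
    rw [hy.2.1, srefl_fix hperp]
  have h1 : R.length z ≤ l'.length := Nat.sInf_le ⟨l', ⟨hl's, hzprod.symm⟩, rfl⟩
  have h2 : R.length y ≤ R.length z := hy.2.2 z hzW hzα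
  have h3 : R.length y = l.length := hllen.symm
  omega
end
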